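/- arXiv:2205.12856 — 7 statements merged into one kernel-verified Lean document; each statement's English description precedes it below -/
import Mathlib

section
/- Let F : ℝ^d → ℝ be twice differentiable with L₂-Lipschitz Hessian, and suppose Δ satisfies the first-order optimality condition g + HΔ + (M/2)‖Δ‖Δ = 0 for vectors g ∈ ℝ^d and a symmetric matrix H. Then for any x, ‖∇F(x+Δ)‖ ≤ ((M+L₂)/2)‖Δ‖² + ‖∇F(x) − g‖ + ‖∇²F(x) − H‖·‖Δ‖. -/
open RealInnerProductSpace

set_option maxHeartbeats 1000000 in
set_option synthInstance.maxHeartbeats 200000 in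

theorem stmt_4 (d : ℕ)
    (F : EuclideanSpace ℝ (Fin d) → ℝ)
    (gradF : EuclideanSpace ℝ (Fin d) → EuclideanSpace ℝ (Fin d))
    (hessF : EuclideanSpace ℝ (Fin d) → EuclideanSpace ℝ (Fin d) →L[ℝ] EuclideanSpace ℝ (Fin d))
    (L₂ M : ℝ) (hL₂ : 0 ≤ L₂) (hM : 0 < M)
    (hgrad : ∀ x, HasGradientAt F (gradF x) x)
    (hhess : ∀ x, HasFDerivAt gradF (hessF x) x)
    (hlip : ∀ x y, ‖hessF x - hessF y‖ ≤ L₂ * ‖x - y‖)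
    (g : EuclideanSpace ℝ (Fin d))
    (H : EuclideanSpace ℝ (Fin d) →L[ℝ] EuclideanSpace ℝ (Fin d))
    (hsymm : ∀ u w, ⟪H u, w⟫ = ⟪u, H w⟫)
    (Δ : EuclideanSpace ℝ (Fin d))
    (hopt : g + H Δ + (M / 2) • (‖Δ‖ • Δ) = 0)
    (x : EuclideanSpace ℝ (Fin d)) :
    ‖gradF (x + Δ)‖ ≤
      (M + L₂) / 2 * ‖Δ‖ ^ 2 + ‖gradF x - g‖ + ‖hessF x - H‖ * ‖Δ‖ := by
  set ψ : ℝ → EuclideanSpace ℝ (Fin d) := fun t => gradF (x + t • Δ) - t • (hessF x Δ) with hψdef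
  have hderiv : ∀ t : ℝ, HasDerivAt ψ (hessF (x + t • Δ) Δ - hessF x Δ) t := by
    intro t
    have h1 : HasDerivAt (fun t : ℝ => x + t • Δ) Δ t := by
      simpa using ((hasDerivAt_id t).smul_const Δ).const_add x
    have h2 : HasDerivAt (fun t : ℝ => gradF (x + t • Δ)) (hessF (x + t • Δ) Δ) t := by
      exact (hhess (x + t • Δ)).comp_hasDerivAt t h1
    have h3 := h2.sub ((hasDerivAt_id t).smul_const (hessF x Δ))
    rw [one_smul] at h3
    exact h3
  have hhess_cont : Continuous hessF := by
    rw [Metric.continuous_iff]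
    intro b ε hε
    rcases eq_or_lt_of_le hL₂ with hL0 | hLpos
    · exact ⟨1, one_pos, fun a _ => by
        have := hlip a b
        rw [← hL0] at this
        simpa [dist_eq_norm] using lt_of_le_of_lt (by simpa using this) hε⟩
    · refine ⟨ε / L₂, div_pos hε hLpos, fun a ha => ?_⟩
      have := hlip a b
      rw [dist_eq_norm] at ha ⊢
      calc ‖hessF a - hessF b‖ ≤ L₂ * ‖a - b‖ := this
        _ < L₂ * (ε / L₂) := by exact (mul_lt_mul_iff_right₀ hLpos).2 ha
        _ = ε := by field_simp
  have hcont : Continuous fun t : ℝ => hessF (x + t • Δ) Δ - hessF x Δ := by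
    have : Continuous fun t : ℝ => hessF (x + t • Δ) :=
      hhess_cont.comp (continuous_const.add (continuous_id.smul continuous_const))
    exact (this.clm_apply continuous_const).sub continuous_const
  have hftc : ψ 1 - ψ 0 = ∫ t in (0:ℝ)..1, (hessF (x + t • Δ) Δ - hessF x Δ) :=
    (intervalIntegral.integral_eq_sub_of_hasDerivAt (fun t _ => hderiv t)
      (hcont.intervalIntegrable 0 1)).symm
  have hbound : ∀ t ∈ Set.Icc (0:ℝ) 1,
      ‖hessF (x + t • Δ) Δ - hessF x Δ‖ ≤ L₂ * ‖Δ‖ ^ 2 * t := by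
    intro t ht
    have h1 : ‖hessF (x + t • Δ) Δ - hessF x Δ‖ ≤ ‖hessF (x + t • Δ) - hessF x‖ * ‖Δ‖ := by
      have := (hessF (x + t • Δ) - hessF x).le_opNorm Δ
      simpa using this
    have h2 : ‖hessF (x + t • Δ) - hessF x‖ ≤ L₂ * (t * ‖Δ‖) := by
      have := hlip (x + t • Δ) x
      simpa [norm_smul, abs_of_nonneg ht.1] using this
    calc ‖hessF (x + t • Δ) Δ - hessF x Δ‖ ≤ L₂ * (t * ‖Δ‖) * ‖Δ‖ :=
          h1.trans (mul_le_mul_of_nonneg_right h2 (norm_nonneg _))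
      _ = L₂ * ‖Δ‖ ^ 2 * t := by ring
  have htaylor : ‖ψ 1 - ψ 0‖ ≤ L₂ / 2 * ‖Δ‖ ^ 2 := by
    rw [hftc]
    have h1 : ‖∫ t in (0:ℝ)..1, (hessF (x + t • Δ) Δ - hessF x Δ)‖ ≤
        ∫ t in (0:ℝ)..1, ‖hessF (x + t • Δ) Δ - hessF x Δ‖ :=
      intervalIntegral.norm_integral_le_integral_norm zero_le_one
    have h2 : (∫ t in (0:ℝ)..1, ‖hessF (x + t • Δ) Δ - hessF x Δ‖) ≤
        ∫ t in (0:ℝ)..1, L₂ * ‖Δ‖ ^ 2 * t := by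
      apply intervalIntegral.integral_mono_on zero_le_one
      · exact (hcont.norm.intervalIntegrable 0 1)
      · exact ((continuous_const.mul continuous_id).intervalIntegrable 0 1)
      · exact hbound
    have h3 : (∫ t in (0:ℝ)..1, L₂ * ‖Δ‖ ^ 2 * t) = L₂ / 2 * ‖Δ‖ ^ 2 := by
      rw [intervalIntegral.integral_const_mul, integral_id]
      ring
    linarith
  have hgH : ‖g + H Δ‖ = M / 2 * ‖Δ‖ ^ 2 := by
    have h0 : g + H Δ = -((M / 2) • (‖Δ‖ • Δ)) := eq_neg_of_add_eq_zero_left hopt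
    rw [h0, norm_neg, norm_smul, norm_smul, Real.norm_eq_abs, Real.norm_eq_abs,
      abs_of_pos (by positivity : (0:ℝ) < M / 2), abs_of_nonneg (norm_nonneg Δ)]
    ring
  have hdecomp : gradF (x + Δ) =
      (ψ 1 - ψ 0) + (gradF x - g) + ((hessF x - H) Δ) + (g + H Δ) := by
    simp only [hψdef, one_smul, zero_smul, add_zero, ContinuousLinearMap.sub_apply]
    abel
  calc ‖gradF (x + Δ)‖
      ≤ ‖ψ 1 - ψ 0‖ + ‖gradF x - g‖ + ‖(hessF x - H) Δ‖ + ‖g + H Δ‖ := by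
        rw [hdecomp]
        exact (norm_add_le _ _).trans (by
          gcongr
          exact (norm_add_le _ _).trans (by gcongr; exact norm_add_le _ _))
    _ ≤ L₂ / 2 * ‖Δ‖ ^ 2 + ‖gradF x - g‖ + ‖hessF x - H‖ * ‖Δ‖ + M / 2 * ‖Δ‖ ^ 2 := by
        gcongr
        · exact (hessF x - H).le_opNorm Δ
        · exact hgH.le
    _ = (M + L₂) / 2 * ‖Δ‖ ^ 2 + ‖gradF x - g‖ + ‖hessF x - H‖ * ‖Δ‖ := by ring
end

section
/- Let F : ℝ^d → ℝ be twice differentiable with L₂-Lipschitz Hessian. Suppose Δ is a global minimizer of the cubic model m(Δ) = ⟨g,Δ⟩ + (1/2)⟨Δ, HΔ⟩ + (M/6)‖Δ‖³, so that gᵀΔ + ΔᵀHΔ + (M/2)‖Δ‖³ = 0 and gᵀΔ ≤ 0. Then ((3M − 2L₂ − 8)/12)·‖Δ‖³ ≤ F(x) − F(x+Δ) + (2/3)‖∇F(x) − g‖^{3/2} + (1/6)‖∇²F(x) − H‖³. -/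
open RealInnerProductSpace

set_option maxHeartbeats 1000000 in
set_option synthInstance.maxHeartbeats 200000 in
theorem stmt_5 (d : ℕ)
    (F : EuclideanSpace ℝ (Fin d) → ℝ)
    (gradF : EuclideanSpace ℝ (Fin d) → EuclideanSpace ℝ (Fin d))
    (hessF : EuclideanSpace ℝ (Fin d) → EuclideanSpace ℝ (Fin d) →L[ℝ] EuclideanSpace ℝ (Fin d))
    (L₂ M : ℝ) (hL₂ : 0 ≤ L₂) (hM : 0 < M)
    (hgrad : ∀ x, HasGradientAt F (gradF x) x)
    (hhess : ∀ x, HasFDerivAt gradF (hessF x) x)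
    (hlip : ∀ x y, ‖hessF x - hessF y‖ ≤ L₂ * ‖x - y‖)
    (g : EuclideanSpace ℝ (Fin d))
    (H : EuclideanSpace ℝ (Fin d) →L[ℝ] EuclideanSpace ℝ (Fin d))
    (hsymm : ∀ u w, ⟪H u, w⟫ = ⟪u, H w⟫)
    (Δ : EuclideanSpace ℝ (Fin d))
    (heq : ⟪g, Δ⟫ + ⟪Δ, H Δ⟫ + (M / 2) * ‖Δ‖ ^ 3 = 0)
    (hgΔ : ⟪g, Δ⟫ ≤ 0)
    (x : EuclideanSpace ℝ (Fin d)) :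
    (3 * M - 2 * L₂ - 8) / 12 * ‖Δ‖ ^ 3 ≤
      F x - F (x + Δ) + 2 / 3 * ‖gradF x - g‖ ^ ((3 : ℝ) / 2)
        + 1 / 6 * ‖hessF x - H‖ ^ 3 := by
  set c : ℝ → EuclideanSpace ℝ (Fin d) := fun t => x + t • Δ with hcdef
  have hcd : ∀ t : ℝ, HasDerivAt c Δ t := by
    intro t
    simpa [hcdef] using ((hasDerivAt_id t).smul_const Δ).const_add x
  have hc0 : c 0 = x := by simp [hcdef]
  have hc1 : c 1 = x + Δ := by simp [hcdef]
  set φ : ℝ → ℝ := fun t => F (c t) with hφdef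
  set G : ℝ → ℝ := fun t => ⟪gradF (c t), Δ⟫ with hGdef
  set Q : ℝ → ℝ := fun t => ⟪(hessF (c t)) Δ, Δ⟫ with hQdef
  have hφd : ∀ t, HasDerivAt φ (G t) t := by
    intro t
    have := ((hgrad (c t)).hasFDerivAt).comp_hasDerivAt t (hcd t)
    simpa [hφdef, hGdef, InnerProductSpace.toDual_apply_apply, Function.comp_def] using this
  have hGd : ∀ t, HasDerivAt G (Q t) t := by
    intro t
    have h1 : HasDerivAt (fun s => gradF (c s)) (hessF (c t) Δ) t :=
      (hhess (c t)).comp_hasDerivAt t (hcd t)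
    have := h1.inner ℝ (hasDerivAt_const t Δ)
    simpa [hGdef, hQdef] using this
  -- Lipschitz bound on second derivative along the line
  have hQbound : ∀ t : ℝ, 0 ≤ t → Q t - Q 0 ≤ L₂ * ‖Δ‖ ^ 3 * t := by
    intro t ht
    have h1 : Q t - Q 0 = ⟪(hessF (c t) - hessF (c 0)) Δ, Δ⟫ := by
      simp [hQdef, ContinuousLinearMap.sub_apply, inner_sub_left]
    have h2 : ⟪(hessF (c t) - hessF (c 0)) Δ, Δ⟫ ≤
        ‖(hessF (c t) - hessF (c 0)) Δ‖ * ‖Δ‖ := real_inner_le_norm _ _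
    have h3 : ‖(hessF (c t) - hessF (c 0)) Δ‖ ≤ ‖hessF (c t) - hessF (c 0)‖ * ‖Δ‖ :=
      ContinuousLinearMap.le_opNorm _ _
    have h4 : ‖hessF (c t) - hessF (c 0)‖ ≤ L₂ * (t * ‖Δ‖) := by
      have := hlip (c t) (c 0)
      have hnorm : ‖c t - c 0‖ = t * ‖Δ‖ := by
        simp [hcdef, norm_smul, abs_of_nonneg ht]
      rwa [hnorm] at this
    have hΔ : (0:ℝ) ≤ ‖Δ‖ := norm_nonneg _
    nlinarith [mul_le_mul_of_nonneg_right h3 hΔ, mul_le_mul_of_nonneg_right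
      (mul_le_mul_of_nonneg_right h4 hΔ) hΔ]
  -- χ and ψ
  set χ : ℝ → ℝ := fun t => G t - G 0 - t * Q 0 - L₂ * ‖Δ‖ ^ 3 / 2 * t ^ 2 with hχdef
  have hχd : ∀ t, HasDerivAt χ (Q t - Q 0 - L₂ * ‖Δ‖ ^ 3 * t) t := by
    intro t
    have h := (((hGd t).sub_const (G 0)).sub ((hasDerivAt_id t).mul_const (Q 0))).sub
      ((hasDerivAt_pow 2 t).const_mul (L₂ * ‖Δ‖ ^ 3 / 2))
    refine h.congr_deriv ?_
    ring
  have hχle : ∀ t ∈ Set.Icc (0:ℝ) 1, χ t ≤ 0 := by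
    have hanti : AntitoneOn χ (Set.Icc 0 1) := by
      apply antitoneOn_of_deriv_nonpos (convex_Icc 0 1)
      · exact fun t _ => (hχd t).continuousAt.continuousWithinAt
      · exact fun t _ => ((hχd t).differentiableAt).differentiableWithinAt
      · intro t ht
        rw [interior_Icc] at ht
        rw [(hχd t).deriv]
        have := hQbound t ht.1.le
        linarith
    intro t ht
    have h0 : χ 0 = 0 := by simp [hχdef]
    have := hanti (Set.left_mem_Icc.mpr zero_le_one) ht ht.1
    linarith
  set ψ : ℝ → ℝ := fun t => φ t - φ 0 - t * G 0 - t ^ 2 / 2 * Q 0 - L₂ * ‖Δ‖ ^ 3 / 6 * t ^ 3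
    with hψdef
  have hψd : ∀ t, HasDerivAt ψ (χ t) t := by
    intro t
    have h := ((((hφd t).sub_const (φ 0)).sub ((hasDerivAt_id t).mul_const (G 0))).sub
      (((hasDerivAt_pow 2 t).div_const 2).mul_const (Q 0))).sub
      ((hasDerivAt_pow 3 t).const_mul (L₂ * ‖Δ‖ ^ 3 / 6))
    refine h.congr_deriv ?_
    simp [hχdef]
    ring
  have hψ1 : ψ 1 ≤ 0 := by
    have hanti : AntitoneOn ψ (Set.Icc 0 1) := by
      apply antitoneOn_of_deriv_nonpos (convex_Icc 0 1)
      · exact fun t _ => (hψd t).continuousAt.continuousWithinAt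
      · exact fun t _ => ((hψd t).differentiableAt).differentiableWithinAt
      · intro t ht
        rw [interior_Icc] at ht
        rw [(hψd t).deriv]
        exact hχle t ⟨ht.1.le, ht.2.le⟩
    have h0 : ψ 0 = 0 := by simp [hψdef]
    have := hanti (Set.left_mem_Icc.mpr zero_le_one) (Set.right_mem_Icc.mpr zero_le_one)
      zero_le_one
    linarith
  -- Taylor bound
  have htaylor : F (x + Δ) ≤ F x + G 0 + Q 0 / 2 + L₂ * ‖Δ‖ ^ 3 / 6 := by
    have : ψ 1 = F (x + Δ) - F x - G 0 - Q 0 / 2 - L₂ * ‖Δ‖ ^ 3 / 6 := by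
      simp [hψdef, hφdef, hc0, hc1]
      ring
    rw [this] at hψ1
    linarith
  -- decompose G 0 and Q 0
  have hG0 : G 0 = ⟪g, Δ⟫ + ⟪gradF x - g, Δ⟫ := by
    simp [hGdef, hc0, inner_sub_left]
  have hQ0 : Q 0 = ⟪Δ, H Δ⟫ + ⟪(hessF x - H) Δ, Δ⟫ := by
    have e1 : Q 0 = ⟪hessF x Δ, Δ⟫ := by simp [hQdef, hc0]
    have e2 : ⟪(hessF x - H) Δ, Δ⟫ = ⟪hessF x Δ, Δ⟫ - ⟪H Δ, Δ⟫ := by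
      simp [ContinuousLinearMap.sub_apply, inner_sub_left]
    have e3 : ⟪Δ, H Δ⟫ = ⟪H Δ, Δ⟫ := real_inner_comm _ _
    rw [e1, e2, e3]; ring
  -- Young's inequalities
  have hΔ : (0:ℝ) ≤ ‖Δ‖ := norm_nonneg _
  have hconj : Real.HolderConjugate (3/2) 3 := ⟨by norm_num, by norm_num, by norm_num⟩
  have hy1 : ⟪gradF x - g, Δ⟫ ≤ 2/3 * ‖gradF x - g‖ ^ ((3:ℝ)/2) + ‖Δ‖ ^ 3 / 3 := by
    have h1 : ⟪gradF x - g, Δ⟫ ≤ ‖gradF x - g‖ * ‖Δ‖ := real_inner_le_norm _ _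
    have h2 := Real.young_inequality_of_nonneg (norm_nonneg (gradF x - g)) hΔ hconj
    have h3 : ‖Δ‖ ^ (3:ℝ) = ‖Δ‖ ^ (3:ℕ) := by
      rw [← Real.rpow_natCast ‖Δ‖ 3]; norm_num
    rw [h3] at h2
    calc ⟪gradF x - g, Δ⟫ ≤ ‖gradF x - g‖ * ‖Δ‖ := h1
      _ ≤ ‖gradF x - g‖ ^ ((3:ℝ)/2) / (3/2) + ‖Δ‖ ^ (3:ℕ) / 3 := h2
      _ = 2/3 * ‖gradF x - g‖ ^ ((3:ℝ)/2) + ‖Δ‖ ^ 3 / 3 := by ring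
  have hy2 : ⟪(hessF x - H) Δ, Δ⟫ ≤ ‖hessF x - H‖ ^ 3 / 3 + 2/3 * ‖Δ‖ ^ 3 := by
    have h1 : ⟪(hessF x - H) Δ, Δ⟫ ≤ ‖(hessF x - H) Δ‖ * ‖Δ‖ := real_inner_le_norm _ _
    have h2 : ‖(hessF x - H) Δ‖ ≤ ‖hessF x - H‖ * ‖Δ‖ := ContinuousLinearMap.le_opNorm _ _
    have h3 : ‖(hessF x - H) Δ‖ * ‖Δ‖ ≤ ‖hessF x - H‖ * ‖Δ‖ ^ 2 := by
      nlinarith [norm_nonneg ((hessF x - H) Δ)]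
    have h4 := Real.young_inequality_of_nonneg (norm_nonneg (hessF x - H))
      (sq_nonneg ‖Δ‖) hconj.symm
    -- h4 : ‖hessF x - H‖ * ‖Δ‖^2 ≤ ‖hessF x - H‖^(3:ℝ)/3 + (‖Δ‖^2)^((3:ℝ)/2)/(3/2)
    have h5 : (‖Δ‖ ^ 2 : ℝ) ^ ((3:ℝ)/2) = ‖Δ‖ ^ 3 := by
      rw [← Real.rpow_natCast ‖Δ‖ 2, ← Real.rpow_mul hΔ, ← Real.rpow_natCast ‖Δ‖ 3]
      norm_num
    have h6 : ‖hessF x - H‖ ^ (3:ℝ) = ‖hessF x - H‖ ^ (3:ℕ) := by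
      rw [← Real.rpow_natCast ‖hessF x - H‖ 3]; norm_num
    rw [h5, h6] at h4
    calc ⟪(hessF x - H) Δ, Δ⟫ ≤ ‖hessF x - H‖ * ‖Δ‖ ^ 2 := le_trans h1 h3
      _ ≤ ‖hessF x - H‖ ^ (3:ℕ) / 3 + ‖Δ‖ ^ 3 / (3/2) := h4
      _ = ‖hessF x - H‖ ^ 3 / 3 + 2/3 * ‖Δ‖ ^ 3 := by ring
  -- combine
  have hH : ⟪Δ, H Δ⟫ = -⟪g, Δ⟫ - (M/2) * ‖Δ‖ ^ 3 := by linarith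
  rw [hG0, hQ0, hH] at htaylor
  linarith
end

section
/- Suppose F : ℝ^d → ℝ is twice differentiable with L₂-Lipschitz Hessian and satisfies the gradient dominance property F(x) − F(x*) ≤ τ_F ‖∇F(x)‖^α for all x, where x* is a global minimizer and α ≥ 1. If Δ is a global minimizer of the cubic model with gradient estimate g and Hessian estimate H, then there exist explicit constants C, C_g, C_H > 0 (depending only on M, L₂, τ_F, α) such that F(x+Δ) − F(x*) ≤ C·(F(x) − F(x+Δ))^{2α/3} + C_g·‖∇F(x) − g‖^α + C_H·‖∇²F(x) − H‖^{2α}. -/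
open RealInnerProductSpace
variable {E : Type*} [NormedAddCommGroup E] [InnerProductSpace ℝ E]

lemma inner_self_hasFDerivAt (Δ : E) : HasFDerivAt (fun v : E => (⟪v,v⟫:ℝ)) ((2:ℝ) • innerSL ℝ Δ) Δ := by
  have h := (hasFDerivAt_id Δ).inner ℝ (hasFDerivAt_id Δ)
  refine h.congr_fderiv ?_
  ext w
  simp [fderivInnerCLM_apply, real_inner_comm]
  ring

lemma norm_cube_hasFDerivAt (Δ : E) :
    HasFDerivAt (fun v : E => ‖v‖^3) (((3:ℝ) * ‖Δ‖) • innerSL ℝ Δ) Δ := by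
  have h := (inner_self_hasFDerivAt Δ).rpow_const (p := 3/2) (Or.inr (by norm_num))
  have hfun : (fun v : E => (⟪v,v⟫:ℝ) ^ (3/2 : ℝ)) = fun v : E => ‖v‖^3 := by
    funext v
    rw [real_inner_self_eq_norm_sq, ← Real.rpow_natCast ‖v‖ 2, ← Real.rpow_mul (norm_nonneg v),
      show ((2:ℕ):ℝ) * (3/2) = ((3:ℕ):ℝ) by norm_num, Real.rpow_natCast]
  rw [hfun] at h
  convert h using 1
  rw [smul_smul, real_inner_self_eq_norm_sq, ← Real.rpow_natCast ‖Δ‖ 2,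
    ← Real.rpow_mul (norm_nonneg Δ), show ((2:ℕ):ℝ) * (3/2 - 1) = 1 by norm_num, Real.rpow_one]
  congr 1
  ring

lemma stationary (g : E) (H : E →L[ℝ] E) (M : ℝ)
    (hsym : ∀ u w, ⟪H u, w⟫ = ⟪u, H w⟫) (Δ : E)
    (hmin : ∀ Δ' : E, ⟪g, Δ⟫ + (1 / 2) * ⟪Δ, H Δ⟫ + (M / 6) * ‖Δ‖ ^ 3 ≤
              ⟪g, Δ'⟫ + (1 / 2) * ⟪Δ', H Δ'⟫ + (M / 6) * ‖Δ'‖ ^ 3) :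
    g + H Δ + ((M / 2) * ‖Δ‖) • Δ = 0 := by
  have h1 : HasFDerivAt (fun v : E => (⟪g, v⟫:ℝ)) (innerSL ℝ g) Δ := (innerSL ℝ g).hasFDerivAt
  have h2 := ((hasFDerivAt_id Δ).inner ℝ H.hasFDerivAt).const_mul (1/2:ℝ)
  have h3 := (norm_cube_hasFDerivAt Δ).const_mul (M/6)
  have hm := (h1.add h2).add h3
  have hloc : IsLocalMin (fun Δ' : E => ⟪g, Δ'⟫ + (1 / 2) * ⟪Δ', H Δ'⟫ + (M / 6) * ‖Δ'‖ ^ 3) Δ :=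
    Filter.Eventually.of_forall hmin
  have h0 := hloc.hasFDerivAt_eq_zero hm
  have key : ∀ w : E, ⟪g + H Δ + ((M / 2) * ‖Δ‖) • Δ, w⟫ = 0 := by
    intro w
    have hw := congrArg (fun T : E →L[ℝ] ℝ => T w) h0
    simp [fderivInnerCLM_apply, real_inner_comm] at hw
    rw [inner_add_left, inner_add_left, real_inner_smul_left]
    have hsym' := hsym Δ w
    linarith [hw, hsym', real_inner_comm w (H Δ)]
  have := key (g + H Δ + ((M / 2) * ‖Δ‖) • Δ)
  rwa [inner_self_eq_zero] at this
variable {E : Type*} [NormedAddCommGroup E] [InnerProductSpace ℝ E]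

lemma line_hasDerivAt (x Δ : E) (t : ℝ) : HasDerivAt (fun s : ℝ => x + s • Δ) Δ t := by
  simpa using ((hasDerivAt_id t).smul_const Δ).const_add x

lemma taylor_grad {gradF : E → E} {hessF : E → E →L[ℝ] E} {L₂ : ℝ}
    (hhess : ∀ y, HasFDerivAt gradF (hessF y) y)
    (hlip : ∀ y z, ‖hessF y - hessF z‖ ≤ L₂ * ‖y - z‖) (x Δ : E) :
    ‖gradF (x + Δ) - gradF x - hessF x Δ‖ ≤ L₂ / 2 * ‖Δ‖ ^ 2 := by
  set f : ℝ → E := fun t => gradF (x + t • Δ) - gradF x - t • hessF x Δ with hf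
  set f' : ℝ → E := fun t => hessF (x + t • Δ) Δ - hessF x Δ with hf'
  have hd : ∀ t : ℝ, HasDerivAt f (f' t) t := by
    intro t
    have h1 : HasDerivAt (fun s : ℝ => gradF (x + s • Δ)) (hessF (x + t • Δ) Δ) t :=
      (hhess (x + t • Δ)).comp_hasDerivAt t (line_hasDerivAt x Δ t)
    refine ((h1.sub_const (gradF x)).sub ((hasDerivAt_id t).smul_const (hessF x Δ))).congr_deriv ?_
    simp [hf']
  have key := image_norm_le_of_norm_deriv_right_le_deriv_boundary
    (f := f) (f' := f') (a := 0) (b := 1)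
    (fun t _ => (hd t).continuousAt.continuousWithinAt)
    (fun t _ => (hd t).hasDerivWithinAt)
    (B := fun t => L₂ / 2 * t ^ 2 * ‖Δ‖ ^ 2) (B' := fun t => L₂ * t * ‖Δ‖ ^ 2)
    (by simp [hf])
    (fun t => by
      have : HasDerivAt (fun t : ℝ => L₂ / 2 * t ^ 2 * ‖Δ‖ ^ 2) (L₂ * t * ‖Δ‖ ^ 2) t := by
        have := ((hasDerivAt_pow 2 t).const_mul (L₂ / 2)).mul_const (‖Δ‖ ^ 2)
        refine this.congr_deriv ?_
        norm_num only
        ring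
      exact this)
    (fun t ht => by
      have h1 : ‖f' t‖ ≤ ‖hessF (x + t • Δ) - hessF x‖ * ‖Δ‖ := by
        simpa [hf'] using (hessF (x + t • Δ) - hessF x).le_opNorm Δ
      have h2 : ‖hessF (x + t • Δ) - hessF x‖ ≤ L₂ * (t * ‖Δ‖) := by
        have := hlip (x + t • Δ) x
        simpa [norm_smul, abs_of_nonneg ht.1] using this
      calc ‖f' t‖ ≤ L₂ * (t * ‖Δ‖) * ‖Δ‖ := by
            refine h1.trans (mul_le_mul_of_nonneg_right h2 (norm_nonneg _))
        _ = L₂ * t * ‖Δ‖ ^ 2 := by ring)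
  have h1 := key (x := 1) (by norm_num)
  simpa [hf] using h1

lemma taylor_fun [CompleteSpace E] {F : E → ℝ} {gradF : E → E} {hessF : E → E →L[ℝ] E} {L₂ : ℝ}
    (hgrad : ∀ y, HasGradientAt F (gradF y) y)
    (hhess : ∀ y, HasFDerivAt gradF (hessF y) y)
    (hlip : ∀ y z, ‖hessF y - hessF z‖ ≤ L₂ * ‖y - z‖) (x Δ : E) :
    |F (x + Δ) - F x - ⟪gradF x, Δ⟫ - 1 / 2 * ⟪Δ, hessF x Δ⟫| ≤ L₂ / 6 * ‖Δ‖ ^ 3 := by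
  set f : ℝ → ℝ := fun t => F (x + t • Δ) - F x - t * ⟪gradF x, Δ⟫
      - t ^ 2 / 2 * ⟪Δ, hessF x Δ⟫ with hfdef
  set f' : ℝ → ℝ := fun t => ⟪gradF (x + t • Δ), Δ⟫ - ⟪gradF x, Δ⟫
      - t * ⟪Δ, hessF x Δ⟫ with hf'def
  have hd : ∀ t : ℝ, HasDerivAt f (f' t) t := by
    intro t
    have h1 : HasDerivAt (fun s : ℝ => F (x + s • Δ)) (⟪gradF (x + t • Δ), Δ⟫) t := by
      have := ((hgrad (x + t • Δ)).hasFDerivAt).comp_hasDerivAt t (line_hasDerivAt x Δ t)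
      exact this
    have h2 : HasDerivAt (fun s : ℝ => s ^ 2 / 2 * ⟪Δ, hessF x Δ⟫) (t * ⟪Δ, hessF x Δ⟫) t := by
      have := ((hasDerivAt_pow 2 t).div_const 2).mul_const (⟪Δ, hessF x Δ⟫ : ℝ)
      refine this.congr_deriv ?_
      push_cast
      ring
    refine ((((h1.sub_const (F x)).sub ((hasDerivAt_id t).mul_const (⟪gradF x, Δ⟫ : ℝ)))).sub h2).congr_deriv ?_
    simp [hf'def]
  have key := image_norm_le_of_norm_deriv_right_le_deriv_boundary
    (f := f) (f' := f') (a := 0) (b := 1)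
    (fun t _ => (hd t).continuousAt.continuousWithinAt)
    (fun t _ => (hd t).hasDerivWithinAt)
    (B := fun t => L₂ / 6 * t ^ 3 * ‖Δ‖ ^ 3) (B' := fun t => L₂ / 2 * t ^ 2 * ‖Δ‖ ^ 3)
    (by simp [hfdef])
    (fun t => by
      have h := ((hasDerivAt_pow 3 t).const_mul (L₂ / 6)).mul_const (‖Δ‖ ^ 3)
      refine h.congr_deriv ?_
      first
      | rfl
      | (norm_num only; ring))
    (fun t ht => by
      have heq : f' t = ⟪gradF (x + t • Δ) - gradF x - hessF x (t • Δ), Δ⟫ := by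
        rw [inner_sub_left, inner_sub_left, map_smul, real_inner_smul_left]
        rw [real_inner_comm Δ (hessF x Δ)]
      have h1 : ‖f' t‖ ≤ ‖gradF (x + t • Δ) - gradF x - hessF x (t • Δ)‖ * ‖Δ‖ := by
        rw [heq, Real.norm_eq_abs]
        exact abs_real_inner_le_norm _ _
      have h2 := taylor_grad hhess hlip x (t • Δ)
      have h3 : ‖t • Δ‖ ^ 2 = t ^ 2 * ‖Δ‖ ^ 2 := by
        rw [norm_smul, Real.norm_eq_abs, mul_pow, sq_abs]
      calc ‖f' t‖ ≤ (L₂ / 2 * (t ^ 2 * ‖Δ‖ ^ 2)) * ‖Δ‖ := by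
            refine h1.trans (mul_le_mul_of_nonneg_right ?_ (norm_nonneg _))
            rw [← h3]; exact h2
        _ = L₂ / 2 * t ^ 2 * ‖Δ‖ ^ 3 := by ring)
  have h1 := key (x := 1) (by norm_num)
  simpa [hfdef] using h1

lemma npow_rpow (x : ℝ) (hx : 0 ≤ x) (n : ℕ) (p : ℝ) : (x ^ n) ^ p = x ^ ((n : ℝ) * p) := by
  rw [← Real.rpow_natCast x n, ← Real.rpow_mul hx]

lemma rpow_add_le2 {a b : ℝ} (p : ℝ) (ha : 0 ≤ a) (hb : 0 ≤ b) (hp : 0 ≤ p) :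
    (a + b) ^ p ≤ 2 ^ p * (a ^ p + b ^ p) := by
  have h1 : a + b ≤ 2 * max a b := by
    have := le_max_left a b; have := le_max_right a b; linarith
  have hm : 0 ≤ max a b := le_trans ha (le_max_left a b)
  calc (a + b) ^ p ≤ (2 * max a b) ^ p :=
        Real.rpow_le_rpow (by linarith) h1 hp
    _ = 2 ^ p * (max a b) ^ p := Real.mul_rpow (by norm_num) hm
    _ ≤ 2 ^ p * (a ^ p + b ^ p) := by
        have h2 : (max a b) ^ p ≤ a ^ p + b ^ p := by
          rcases le_total a b with h | h
          · rw [max_eq_right h]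
            have := Real.rpow_nonneg ha p; linarith
          · rw [max_eq_left h]
            have := Real.rpow_nonneg hb p; linarith
        have : (0:ℝ) ≤ 2 ^ p := Real.rpow_nonneg (by norm_num) p
        nlinarith
lemma rpow_add_le3 {a b c : ℝ} (p : ℝ) (ha : 0 ≤ a) (hb : 0 ≤ b) (hc : 0 ≤ c) (hp : 0 ≤ p) :
    (a + b + c) ^ p ≤ 4 ^ p * (a ^ p + b ^ p + c ^ p) := by
  have h2p : (0:ℝ) ≤ 2 ^ p := Real.rpow_nonneg (by norm_num) p
  have h1 : (a + b + c) ^ p ≤ 2 ^ p * ((a + b) ^ p + c ^ p) :=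
    rpow_add_le2 p (by linarith) hc hp
  have h2 : (a + b) ^ p ≤ 2 ^ p * (a ^ p + b ^ p) := rpow_add_le2 p ha hb hp
  have h4 : (2:ℝ) ^ p * 2 ^ p = 4 ^ p := by
    rw [← Real.mul_rpow (by norm_num) (by norm_num)]; norm_num
  have h1p : (1:ℝ) ≤ 2 ^ p := by
    have := Real.rpow_le_rpow_of_exponent_le (one_le_two) hp
    simpa using this
  have hcp : 0 ≤ c ^ p := Real.rpow_nonneg hc p
  have h5 := mul_le_mul_of_nonneg_left h2 h2p
  have h6 : (2:ℝ) ^ p ≤ 4 ^ p := by nlinarith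
  nlinarith [Real.rpow_nonneg ha p, Real.rpow_nonneg hb p,
    mul_le_mul_of_nonneg_right h6 hcp]

lemma young1 {r s : ℝ} (hr : 0 ≤ r) (hs : 0 ≤ s) : r * s ≤ r ^ 3 / 6 + 2 * s ^ ((3:ℝ)/2) := by
  set u := Real.sqrt s with hu_def
  have hu : 0 ≤ u := Real.sqrt_nonneg s
  have hs2 : s = u ^ 2 := (Real.sq_sqrt hs).symm
  have h32 : s ^ ((3:ℝ)/2) = u ^ 3 := by
    rw [hs2, npow_rpow u hu 2, show ((2:ℕ):ℝ) * (3/2) = ((3:ℕ):ℝ) by norm_num,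
      Real.rpow_natCast]
  rw [h32, hs2]
  nlinarith [mul_nonneg hr (sq_nonneg (r - 2*u)), mul_nonneg hu (sq_nonneg (r - 2*u)),
    mul_nonneg hu (sq_nonneg (r - u)), pow_nonneg hu 3]

lemma young2 {r h : ℝ} (hr : 0 ≤ r) (hh : 0 ≤ h) : 1/2 * h * r ^ 2 ≤ r ^ 3 / 6 + 2 * h ^ 3 := by
  nlinarith [mul_nonneg (add_nonneg hr hh) (sq_nonneg (r - 2*h)), pow_nonneg hh 3]

lemma neg_rpow_lb {x : ℝ} (hx : x < 0) (y : ℝ) : -((-x) ^ y) ≤ x ^ y := by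
  rw [Real.rpow_def_of_neg hx, Real.rpow_def_of_pos (neg_pos.2 hx), Real.log_neg_eq_log]
  nlinarith [Real.exp_pos (Real.log x * y), Real.neg_one_le_cos (y * Real.pi),
    Real.cos_le_one (y * Real.pi)]
set_option maxHeartbeats 2000000

theorem stmt_6 (d : ℕ)
    (F : EuclideanSpace ℝ (Fin d) → ℝ)
    (gradF : EuclideanSpace ℝ (Fin d) → EuclideanSpace ℝ (Fin d))
    (hessF : EuclideanSpace ℝ (Fin d) → EuclideanSpace ℝ (Fin d) →L[ℝ] EuclideanSpace ℝ (Fin d))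
    (L₂ M τF α : ℝ) (hL₂ : 0 ≤ L₂) (hM : 3 * M > 2 * L₂ + 8) (hτF : 0 < τF)
    (hα : 1 ≤ α) (hα' : α ≤ 2)
    (hgrad : ∀ x, HasGradientAt F (gradF x) x)
    (hhess : ∀ x, HasFDerivAt gradF (hessF x) x)
    (hlip : ∀ x y, ‖hessF x - hessF y‖ ≤ L₂ * ‖x - y‖)
    (xstar : EuclideanSpace ℝ (Fin d))
    (hmin : ∀ y, F xstar ≤ F y)
    (hGD : ∀ x, F x - F xstar ≤ τF * ‖gradF x‖ ^ α) :
    ∃ C Cg CH : ℝ, 0 < C ∧ 0 < Cg ∧ 0 < CH ∧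
      ∀ (x g : EuclideanSpace ℝ (Fin d))
        (H : EuclideanSpace ℝ (Fin d) →L[ℝ] EuclideanSpace ℝ (Fin d)),
        (∀ u w, ⟪H u, w⟫ = ⟪u, H w⟫) →
        ∀ Δ : EuclideanSpace ℝ (Fin d),
          (∀ Δ' : EuclideanSpace ℝ (Fin d),
            ⟪g, Δ⟫ + (1 / 2) * ⟪Δ, H Δ⟫ + (M / 6) * ‖Δ‖ ^ 3 ≤
              ⟪g, Δ'⟫ + (1 / 2) * ⟪Δ', H Δ'⟫ + (M / 6) * ‖Δ'‖ ^ 3) →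
          F (x + Δ) - F xstar ≤
            C * (F x - F (x + Δ)) ^ (2 * α / 3) + Cg * ‖gradF x - g‖ ^ α
              + CH * ‖hessF x - H‖ ^ (2 * α) := by
  have hM0 : 0 < M := by linarith
  set K := (L₂ + M + 1) / 2 with hK_def
  have hK1 : 1 ≤ K := by rw [hK_def]; linarith
  have hK0 : 0 < K := by linarith
  have hβpos : 0 < 2 * α / 3 := by linarith
  set β := 2 * α / 3 with hβ_def
  have hβ2 : β ≤ 2 := by rw [hβ_def]; linarith
  have hKα0 : (0:ℝ) < K ^ α := Real.rpow_pos_of_pos hK0 α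
  have h4α0 : (0:ℝ) < (4:ℝ) ^ α := Real.rpow_pos_of_pos (by norm_num) α
  set A := τF * K ^ α * 4 ^ α with hA_def
  have hA0 : 0 < A := by rw [hA_def]; positivity
  set Q := (24:ℝ) ^ β with hQ_def
  have hQ0 : 0 < Q := Real.rpow_pos_of_pos (by norm_num) β
  refine ⟨A * Q, A * (1 + Q) + 16 * (A * Q), A * (1 + Q) + 16 * (A * Q),
    by positivity, by positivity, by positivity, ?_⟩
  intro x g H hsym Δ hminΔ
  -- facts using the raw minimality hypothesis
  have hstatv : g + H Δ + ((M / 2) * ‖Δ‖) • Δ = 0 := stationary g H M hsym Δ hminΔ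
  have hgΔ0 : ⟪g, Δ⟫ ≤ (0:ℝ) := by
    have h := hminΔ (-Δ)
    simp only [inner_neg_left, inner_neg_right, map_neg, norm_neg, neg_neg] at h
    linarith only [h]
  -- abbreviations
  set r := ‖Δ‖ with hr_def
  have hr0 : 0 ≤ r := norm_nonneg Δ
  set dg := ‖gradF x - g‖ with hdg_def
  have hdg0 : 0 ≤ dg := norm_nonneg _
  set dH := ‖hessF x - H‖ with hdH_def
  have hdH0 : 0 ≤ dH := norm_nonneg _
  set D := F x - F (x + Δ) with hD_def
  set G := dg ^ ((3:ℝ)/2) with hG_def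
  have hG0 : 0 ≤ G := Real.rpow_nonneg hdg0 _
  set T := dH ^ 3 with hT_def
  have hT0 : 0 ≤ T := pow_nonneg hdH0 3
  -- inner product of stationarity with Δ
  have hip : ⟪g, Δ⟫ + ⟪H Δ, Δ⟫ + (M/2) * r ^ 3 = 0 := by
    have h := congrArg (fun v => (⟪v, Δ⟫ : ℝ)) hstatv
    simp only [inner_add_left, real_inner_smul_left, inner_zero_left,
      real_inner_self_eq_norm_sq] at h
    have hq : r ^ 3 = r * r ^ 2 := by ring
    rw [hq]
    linarith only [h]
  have hO2 : -((M/2) * r ^ 3) ≤ ⟪H Δ, Δ⟫ := by linarith only [hip, hgΔ0]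
  -- Cauchy-Schwarz facts
  have hcs1 : ⟪gradF x, Δ⟫ ≤ ⟪g, Δ⟫ + dg * r := by
    have h := real_inner_le_norm (gradF x - g) Δ
    rw [inner_sub_left] at h
    linarith only [h]
  have hbound : ‖(hessF x - H) Δ‖ ≤ dH * r := (hessF x - H).le_opNorm Δ
  have hcs2 : ⟪Δ, hessF x Δ⟫ ≤ ⟪Δ, H Δ⟫ + dH * r ^ 2 := by
    have h1 : (⟪Δ, (hessF x - H) Δ⟫:ℝ) ≤ r * (dH * r) :=
      (real_inner_le_norm _ _).trans (mul_le_mul_of_nonneg_left hbound hr0)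
    have h2 : (⟪Δ, hessF x Δ⟫:ℝ) - ⟪Δ, H Δ⟫ = ⟪Δ, (hessF x - H) Δ⟫ := by
      rw [← inner_sub_right]
      simp [ContinuousLinearMap.sub_apply]
    nlinarith only [h1, h2]
  have hcomm : (⟪Δ, H Δ⟫:ℝ) = ⟪H Δ, Δ⟫ := real_inner_comm _ _
  -- decrease bound
  have hT2 := taylor_fun hgrad hhess hlip x Δ
  have habs := abs_le.1 hT2
  have hy1 : dg * r ≤ r ^ 3 / 6 + 2 * G := by
    rw [hG_def, mul_comm]
    exact young1 hr0 hdg0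
  have hy2 : 1/2 * dH * r ^ 2 ≤ r ^ 3 / 6 + 2 * T := by
    rw [hT_def]
    exact young2 hr0 hdH0
  have hdec : 1/3 * r ^ 3 - 2*G - 2*T ≤ D := by
    have hkey : F (x + Δ) - F x ≤ ⟪gradF x, Δ⟫ + 1/2 * ⟪Δ, hessF x Δ⟫ + L₂/6 * r^3 := by
      linarith only [habs.2]
    have hprod : 0 ≤ (M/4 - L₂/6 - 2/3) * r ^ 3 :=
      mul_nonneg (by linarith) (pow_nonneg hr0 3)
    linarith only [hkey, hcs1, hcs2, hip, hO2, hy1, hy2, hprod, hcomm]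
  -- gradient norm bound
  have hgHΔ : ‖g + H Δ‖ = M/2 * r^2 := by
    have h : g + H Δ = -(((M/2) * r) • Δ) := eq_neg_of_add_eq_zero_left hstatv
    rw [h, norm_neg, norm_smul, Real.norm_eq_abs,
      abs_of_nonneg (mul_nonneg (by linarith) hr0)]
    ring
  have hN : ‖gradF (x+Δ)‖ ≤ K * (r^2 + dg + dH^2) := by
    have h1 := taylor_grad hhess hlip x Δ
    have hdecomp : gradF (x+Δ) = (gradF (x+Δ) - gradF x - hessF x Δ) + (gradF x - g)
        + ((hessF x - H) Δ) + (g + H Δ) := by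
      simp only [ContinuousLinearMap.sub_apply]
      abel
    have h2 : ‖gradF (x+Δ)‖ ≤ ‖gradF (x+Δ) - gradF x - hessF x Δ‖ + ‖gradF x - g‖
        + ‖(hessF x - H) Δ‖ + ‖g + H Δ‖ := by
      nth_rewrite 1 [hdecomp]
      exact le_trans (norm_add_le _ _) (add_le_add_left (le_trans (norm_add_le _ _)
        (add_le_add_left (norm_add_le _ _) _)) _)
    have h3 : ‖gradF (x+Δ)‖ ≤ L₂/2*r^2 + dg + dH*r + M/2*r^2 :=
      by linarith only [h1, h2, hbound, hgHΔ]
    have h4 : dH*r ≤ 1/2*dH^2 + 1/2*r^2 := by nlinarith only [sq_nonneg (dH - r)]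
    have h5 : 0 ≤ (K - 1) * dg := mul_nonneg (by linarith only [hK1]) hdg0
    have h6 : 0 ≤ (K - 1/2) * dH^2 :=
      mul_nonneg (by linarith only [hK1]) (sq_nonneg dH)
    have h7 : K * (r^2 + dg + dH^2) = (L₂/2 + M/2 + 1/2)*r^2 + K*dg + K*dH^2 := by
      rw [hK_def]; ring
    rw [h7]
    linarith only [h3, h4, h5, h6]
  clear_value K β A Q r dg dH D G T
  -- power chain
  have hnn : (0:ℝ) ≤ r^2 + dg + dH^2 := by positivity
  have hstep1 : F (x+Δ) - F xstar ≤ τF * (K * (r^2 + dg + dH^2)) ^ α :=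
    le_trans (hGD (x+Δ)) (mul_le_mul_of_nonneg_left
      (Real.rpow_le_rpow (norm_nonneg _) hN (by linarith)) (le_of_lt hτF))
  have hKmul : (K * (r^2+dg+dH^2))^α = K^α * (r^2+dg+dH^2)^α :=
    Real.mul_rpow (le_of_lt hK0) hnn
  have hsplit : (r^2+dg+dH^2)^α ≤ 4^α * ((r^2)^α + dg^α + (dH^2)^α) :=
    rpow_add_le3 α (sq_nonneg r) hdg0 (sq_nonneg dH) (by linarith)
  have hr2α : ((r^2:ℝ))^α = ((r^3:ℝ))^β := by
    rw [npow_rpow r hr0 2, npow_rpow r hr0 3]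
    congr 1
    rw [hβ_def]
    push_cast
    ring
  have hdH2α : ((dH^2:ℝ))^α = dH ^ (2*α) := by
    rw [npow_rpow dH hdH0 2, show ((2:ℕ):ℝ)*α = 2*α by push_cast; ring]
  -- rpow of the decrease
  set Dp := max D 0 with hDp_def
  clear_value Dp
  have hDp0 : 0 ≤ Dp := hDp_def ▸ le_max_right D 0
  have hr3 : r^3 ≤ 6*(Dp + G + T) := by
    have h1 : D ≤ Dp := hDp_def ▸ le_max_left D 0
    linarith only [hdec, h1, hG0, hT0, hDp0]
  have hGβ : G^β = dg^α := by
    rw [hG_def, ← Real.rpow_mul hdg0, show (3:ℝ)/2 * β = α by rw [hβ_def]; ring]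
  have hTβ : T^β = dH^(2*α) := by
    rw [hT_def, npow_rpow dH hdH0 3, show ((3:ℕ):ℝ)*β = 2*α by rw [hβ_def]; push_cast; ring]
  have hr3β : ((r^3:ℝ))^β ≤ Q * (Dp^β + dg^α + dH^(2*α)) := by
    calc ((r^3:ℝ))^β ≤ (6*(Dp + G + T))^β :=
          Real.rpow_le_rpow (pow_nonneg hr0 3) hr3 (le_of_lt hβpos)
      _ = 6^β * (Dp+G+T)^β := Real.mul_rpow (by norm_num) (by positivity)
      _ ≤ 6^β * (4^β * (Dp^β + G^β + T^β)) :=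
          mul_le_mul_of_nonneg_left (rpow_add_le3 β hDp0 hG0 hT0 (le_of_lt hβpos))
            (Real.rpow_nonneg (by norm_num) β)
      _ = Q * (Dp^β + G^β + T^β) := by
          rw [hQ_def, ← mul_assoc, ← Real.mul_rpow (by norm_num) (by norm_num)]
          norm_num
      _ = Q * (Dp^β + dg^α + dH^(2*α)) := by rw [hGβ, hTβ]
  -- master bound
  have hdgα0 : (0:ℝ) ≤ dg^α := Real.rpow_nonneg hdg0 α
  have hdH2α0 : (0:ℝ) ≤ dH^(2*α) := Real.rpow_nonneg hdH0 (2*α)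
  have hDpβ0 : (0:ℝ) ≤ Dp^β := Real.rpow_nonneg hDp0 β
  have hmaster : F (x+Δ) - F xstar ≤ A * Q * Dp^β + (A*(1+Q)) * (dg^α + dH^(2*α)) := by
    have e1 : F (x+Δ) - F xstar ≤ τF * (K^α * (4^α * ((r^2)^α + dg^α + (dH^2)^α))) := by
      refine le_trans hstep1 ?_
      rw [hKmul]
      exact mul_le_mul_of_nonneg_left
        (mul_le_mul_of_nonneg_left hsplit (le_of_lt hKα0)) (le_of_lt hτF)
    have e2 : τF * (K^α * (4^α * ((r^2)^α + dg^α + (dH^2)^α)))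
        = A * ((r^2)^α + dg^α + (dH^2)^α) := by rw [hA_def]; ring
    rw [e2] at e1
    rw [hr2α, hdH2α] at e1
    have e3 : ((r^3:ℝ))^β + dg^α + dH^(2*α)
        ≤ Q * (Dp^β + dg^α + dH^(2*α)) + dg^α + dH^(2*α) := by
      linarith only [hr3β]
    have e4 := mul_le_mul_of_nonneg_left e3 hA0.le
    have e5 : A * (Q * (Dp^β + dg^α + dH^(2*α)) + dg^α + dH^(2*α))
        = A * Q * Dp^β + (A*(1+Q)) * (dg^α + dH^(2*α)) := by ring
    linarith only [e1, e4, e5]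
  rcases le_or_gt 0 D with hD | hD
  · -- D ≥ 0
    have hDpD : Dp = D := by rw [hDp_def]; exact max_eq_left hD
    rw [hDpD] at hmaster
    have hm1 : 0 ≤ A * Q * dg^α := mul_nonneg (mul_nonneg hA0.le hQ0.le) hdgα0
    have hm2 : 0 ≤ A * Q * dH^(2*α) := mul_nonneg (mul_nonneg hA0.le hQ0.le) hdH2α0
    linarith only [hmaster, hm1, hm2]
  · -- D < 0
    have hDpD : Dp = 0 := by rw [hDp_def]; exact max_eq_right hD.le
    have hDpβ : Dp^β = 0 := by rw [hDpD]; exact Real.zero_rpow (ne_of_gt hβpos)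
    rw [hDpβ] at hmaster
    -- lower bound on D^β
    have hnegD : -D ≤ 2*(G + T) := by
      linarith only [hdec, pow_nonneg hr0 3]
    have h1 : -((-D)^β) ≤ D^β := neg_rpow_lb hD β
    have h2 : (-D)^β ≤ (2*(G+T))^β :=
      Real.rpow_le_rpow (by linarith) hnegD (le_of_lt hβpos)
    have h3 : ((2:ℝ)*(G+T))^β = 2^β*(G+T)^β := Real.mul_rpow (by norm_num) (by linarith)
    have h4 : (G+T)^β ≤ 2^β*(G^β+T^β) := rpow_add_le2 β hG0 hT0 (le_of_lt hβpos)
    have h5 : (2:ℝ)^β ≤ 4 := by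
      have := Real.rpow_le_rpow_of_exponent_le one_le_two hβ2
      rw [show ((2:ℝ):ℝ)^(2:ℝ) = 4 by
        rw [show (2:ℝ) = ((2:ℕ):ℝ) by norm_num, Real.rpow_natCast]; norm_num] at this
      exact this
    have h2β0 : (0:ℝ) ≤ 2^β := Real.rpow_nonneg (by norm_num) β
    have h6 : (-D)^β ≤ 16*(dg^α + dH^(2*α)) := by
      rw [← hGβ, ← hTβ]
      calc (-D)^β ≤ 2^β*(G+T)^β := by rw [← h3]; exact h2
        _ ≤ 2^β*(2^β*(G^β+T^β)) := mul_le_mul_of_nonneg_left h4 h2β0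
        _ = (2^β*2^β)*(G^β+T^β) := by ring
        _ ≤ 16*(G^β+T^β) := by
            have hGβ0 : 0 ≤ G^β := Real.rpow_nonneg hG0 β
            have hTβ0 : 0 ≤ T^β := Real.rpow_nonneg hT0 β
            have h55 : (2:ℝ)^β*2^β ≤ 16 := by nlinarith only [h5, h2β0]
            have := mul_le_mul_of_nonneg_right h55
              (by linarith only [hGβ0, hTβ0] : (0:ℝ) ≤ G^β + T^β)
            linarith only [this]
    have h7 : -(16*(dg^α + dH^(2*α))) ≤ D^β := by linarith only [h1, h6]
    have h8 : 0 ≤ D^β + 16*(dg^α + dH^(2*α)) := by linarith only [h7]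
    have hm3 : 0 ≤ A * Q * (D^β + 16*(dg^α + dH^(2*α))) :=
      mul_nonneg (mul_nonneg hA0.le hQ0.le) h8
    linarith only [hmaster, hm3]
end

section
/- Let (δ_t) be a sequence of nonnegative reals satisfying δ_{t+1} ≤ (δ_t − δ_{t+1})^{2α/3} for all t, where 1 ≤ α < 3/2. Then as long as δ_t ≥ 1, the sequence decays geometrically: δ_t ≤ (1/2)^t δ_0. -/
theorem stmt_7 (α : ℝ) (hα : 1 ≤ α) (hα' : α < 3 / 2) (δ : ℕ → ℝ)
    (hnonneg : ∀ t, 0 ≤ δ t)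
    (hrec : ∀ t, δ (t + 1) ≤ (δ t - δ (t + 1)) ^ (2 * α / 3)) :
    ∀ t : ℕ, (∀ s ≤ t, 1 ≤ δ s) → δ t ≤ (1 / 2) ^ t * δ 0 := by
  have hexp2 : 2 * α / 3 ≤ 1 := by nlinarith
  have hexppos : 0 < 2 * α / 3 := by nlinarith
  have key : ∀ t, 1 ≤ δ (t + 1) → 2 * δ (t + 1) ≤ δ t := by
    intro t h1
    set d := δ t - δ (t + 1) with hd
    have hrec' := hrec t
    rw [← hd] at hrec'
    have hdpos : 0 < d := by
      by_contra hneg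
      push_neg at hneg
      rcases lt_or_eq_of_le hneg with hlt | heq
      · have hdef := Real.rpow_def_of_neg hlt (2 * α / 3)
        have hcos : Real.cos (2 * α / 3 * Real.pi) ≤ 0 := by
          apply Real.cos_nonpos_of_pi_div_two_le_of_le
          · nlinarith [Real.pi_pos]
          · nlinarith [Real.pi_pos]
        have hprod : Real.exp (Real.log d * (2 * α / 3)) *
            Real.cos (2 * α / 3 * Real.pi) ≤ 0 :=
          mul_nonpos_of_nonneg_of_nonpos
            (le_of_lt (Real.exp_pos _)) hcos
        rw [hdef] at hrec'
        linarith
      · rw [heq, Real.zero_rpow (ne_of_gt hexppos)] at hrec'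
        linarith
    have hd1 : 1 ≤ d := by
      by_contra hlt
      push_neg at hlt
      have : d ^ (2 * α / 3) < 1 :=
        Real.rpow_lt_one (le_of_lt hdpos) hlt hexppos
      linarith
    have hle : d ^ (2 * α / 3) ≤ d ^ (1 : ℝ) :=
      Real.rpow_le_rpow_of_exponent_le hd1 hexp2
    rw [Real.rpow_one] at hle
    linarith
  intro t
  induction t with
  | zero => intro _; simp
  | succ n ih =>
    intro hs
    have h1 : 1 ≤ δ (n + 1) := hs (n + 1) le_rfl
    have h2 := key n h1
    have h3 := ih (fun s hsn => hs s (le_trans hsn (Nat.le_succ n)))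
    calc δ (n + 1) ≤ δ n / 2 := by linarith
    _ ≤ ((1 / 2) ^ n * δ 0) / 2 := by linarith
    _ = (1 / 2) ^ (n + 1) * δ 0 := by ring
end

section
/- Let (δ_t) be a sequence of nonnegative reals satisfying δ_{t+1} ≤ (δ_t − δ_{t+1})^{2α/3} with 1 ≤ α < 3/2, and set β = 2α/(3−2α). Then for any t' ≤ t with δ_{t'} < 1, δ_t ≤ β^β · (β δ_{t'}^{−1/β} + (t − t')/2)^{−β}; in particular δ_t = O(t^{−β}). -/
open Real

private lemma step_ineq (β : ℝ) (hβ2 : 2 ≤ β) {y x : ℝ} (hy : 0 < y) (hy1 : y ≤ 1)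
    (hx : y + y ^ ((β + 1) / β) ≤ x) :
    x ^ (-1 / β) + 1 / (2 * β) ≤ y ^ (-1 / β) := by
  have hβpos : (0:ℝ) < β := by linarith
  set s : ℝ := y ^ (1 / β) with hs
  have hspos : 0 < s := rpow_pos_of_pos hy _
  have hs1 : s ≤ 1 := by
    have := Real.rpow_le_one (le_of_lt hy) hy1 (by positivity : (0:ℝ) ≤ 1/β)
    simpa [hs] using this
  have hys : y ^ ((β + 1) / β) = y * s := by
    have h1 : (β + 1) / β = 1 + 1 / β := by field_simp
    rw [h1, rpow_add hy, rpow_one]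
  have hxge : y * (1 + s) ≤ x := by
    rw [mul_add, mul_one]; rw [hys] at hx; linarith
  have hxpos : 0 < x := lt_of_lt_of_le (by positivity) hxge
  have h2 : x ^ (-1 / β) ≤ (y * (1 + s)) ^ (-1 / β) :=
    rpow_le_rpow_of_nonpos (by positivity) hxge (by
      rw [neg_div]; exact neg_nonpos.mpr (by positivity))
  have h3 : (y * (1 + s)) ^ (-1 / β) = y ^ (-1 / β) * (1 + s) ^ (-1 / β) :=
    Real.mul_rpow (le_of_lt hy) (by positivity)
  have hyinv : y ^ (-1 / β) = s⁻¹ := by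
    rw [neg_div, Real.rpow_neg (le_of_lt hy)]
  have hbern : 1 - s / 2 ≤ (1 - s / (2 * β)) ^ β := by
    have := one_add_mul_self_le_rpow_one_add
      (s := -(s / (2 * β))) (by
        have h0 : s / (2 * β) ≤ 1 := by
          rw [div_le_one (by positivity)]; nlinarith
        linarith) (p := β) (by linarith)
    have h4 : 1 + β * -(s / (2 * β)) = 1 - s / 2 := by field_simp; ring
    rw [h4] at this
    have h5 : 1 + -(s / (2 * β)) = 1 - s / (2 * β) := by ring
    rwa [h5] at this
  have hinvle : (1 + s)⁻¹ ≤ 1 - s / 2 := by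
    rw [inv_le_iff_one_le_mul₀ (by positivity)]
    nlinarith
  have hb0 : (0:ℝ) < 1 - s / (2 * β) := by
    have : s / (2 * β) ≤ 1 / 4 := by
      rw [div_le_div_iff₀ (by positivity) (by norm_num)]; nlinarith
    linarith
  have hkey : (1 + s) ^ (-1 / β) ≤ 1 - s / (2 * β) := by
    have h6 : ((1 + s)⁻¹) ^ (1 / β) ≤ ((1 - s / (2 * β)) ^ β) ^ (1 / β) :=
      Real.rpow_le_rpow (by positivity) (le_trans hinvle hbern) (by positivity)
    have h7 : ((1 - s / (2 * β)) ^ β) ^ (1 / β) = 1 - s / (2 * β) := by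
      rw [← Real.rpow_mul hb0.le, mul_one_div, div_self hβpos.ne', rpow_one]
    have h8 : ((1 + s)⁻¹) ^ (1 / β) = (1 + s) ^ (-1 / β) := by
      rw [← Real.rpow_neg_one (1 + s), ← Real.rpow_mul (by positivity)]
      congr 1; ring
    rw [h8, h7] at h6
    exact h6
  have h9 : s⁻¹ * (1 + s) ^ (-1 / β) ≤ s⁻¹ * (1 - s / (2 * β)) :=
    mul_le_mul_of_nonneg_left hkey (by positivity)
  have h10 : s⁻¹ * (1 - s / (2 * β)) = s⁻¹ - 1 / (2 * β) := by
    field_simp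
  rw [hyinv] at h3 ⊢
  rw [h3] at h2
  linarith

theorem stmt_8 (α : ℝ) (hα : 1 ≤ α) (hα' : α < 3 / 2) (δ : ℕ → ℝ)
    (hnonneg : ∀ t, 0 ≤ δ t)
    (hrec : ∀ t, δ (t + 1) ≤ (δ t - δ (t + 1)) ^ (2 * α / 3))
    (β : ℝ) (hβ : β = 2 * α / (3 - 2 * α))
    (t' t : ℕ) (htt : t' ≤ t) (hδt' : δ t' < 1) :
    δ t ≤ β ^ β * (β * (δ t') ^ (-1 / β) + ((t : ℝ) - (t' : ℝ)) / 2) ^ (-β) := by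
  have h3α : (0:ℝ) < 3 - 2 * α := by linarith
  have hβ2 : 2 ≤ β := by
    rw [hβ, le_div_iff₀ h3α]; linarith
  have hβpos : (0:ℝ) < β := by linarith
  -- monotonicity
  have hmono : ∀ s : ℕ, δ (s + 1) ≤ δ s := by
    intro s
    by_contra h
    push_neg at h
    have hneg : δ s - δ (s + 1) < 0 := by linarith
    have := hrec s
    rw [Real.rpow_def_of_neg hneg] at this
    have hcos : Real.cos (2 * α / 3 * π) < 0 := by
      apply Real.cos_neg_of_pi_div_two_lt_of_lt
      · nlinarith [Real.pi_pos]
      · nlinarith [Real.pi_pos]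
    nlinarith [hnonneg (s + 1), Real.exp_pos (Real.log (δ s - δ (s + 1)) * (2 * α / 3))]
  have hanti : Antitone δ := antitone_nat_of_succ_le hmono
  -- gap lemma
  have hgap : ∀ s : ℕ, 0 < δ (s + 1) → δ (s + 1) + δ (s + 1) ^ ((β + 1) / β) ≤ δ s := by
    intro s hpos
    have hd : 0 ≤ δ s - δ (s + 1) := by linarith [hmono s]
    have hd' : 0 < δ s - δ (s + 1) := by
      rcases eq_or_lt_of_le hd with h | h
      · exfalso
        have h' := hrec s
        rw [← h, Real.zero_rpow (show (2 * α / 3) ≠ 0 by positivity)] at h'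
        linarith
      · exact h
    have hexp : (β + 1) / β = 3 / (2 * α) := by
      rw [hβ]; field_simp; ring
    have h1 : δ (s + 1) ^ (3 / (2 * α)) ≤ ((δ s - δ (s + 1)) ^ (2 * α / 3)) ^ (3 / (2 * α)) :=
      Real.rpow_le_rpow (hnonneg _) (hrec s) (by positivity)
    have h2 : ((δ s - δ (s + 1)) ^ (2 * α / 3)) ^ (3 / (2 * α)) = δ s - δ (s + 1) := by
      rw [← Real.rpow_mul hd]
      rw [show 2 * α / 3 * (3 / (2 * α)) = 1 by field_simp, rpow_one]
    rw [hexp]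
    rw [h2] at h1
    linarith
  -- induction
  have hind : ∀ n : ℕ, 0 < δ (t' + n) →
      δ t' ^ (-1 / β) + (n : ℝ) / (2 * β) ≤ δ (t' + n) ^ (-1 / β) := by
    intro n
    induction n with
    | zero => intro _; simp
    | succ n ih =>
      intro hpos
      have hposn : 0 < δ (t' + n) := lt_of_lt_of_le hpos (hmono (t' + n))
      have hle1 : δ (t' + (n + 1)) ≤ 1 := le_trans (hanti (Nat.le_add_right t' (n + 1))) hδt'.le
      have hstep := step_ineq β hβ2 (x := δ (t' + n)) hpos hle1 (hgap (t' + n) hpos)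
      have := ih hposn
      push_cast
      have hsum : ((n : ℝ) + 1) / (2 * β) = (n : ℝ) / (2 * β) + 1 / (2 * β) := by ring
      rw [hsum]
      linarith [hstep]
  -- conclusion
  rcases eq_or_lt_of_le (hnonneg t) with hz | hpos
  · rw [← hz]
    apply mul_nonneg (Real.rpow_nonneg hβpos.le _)
    apply Real.rpow_nonneg
    have h1 : (0:ℝ) ≤ (δ t') ^ (-1 / β) := Real.rpow_nonneg (hnonneg t') _
    have h2 : (t':ℝ) ≤ t := Nat.cast_le.mpr htt
    nlinarith
  · obtain ⟨n, rfl⟩ := Nat.exists_eq_add_of_le htt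
    have hu := hind n hpos
    have hδt'pos : 0 < δ t' := lt_of_lt_of_le hpos (hanti (Nat.le_add_right t' n))
    have hu' : 0 < δ t' ^ (-1 / β) := rpow_pos_of_pos hδt'pos _
    set z : ℝ := δ t' ^ (-1 / β) + (n : ℝ) / (2 * β) with hz
    have hzpos : 0 < z := by positivity
    have hbase : β * (δ t') ^ (-1 / β) + (((t' + n : ℕ) : ℝ) - (t' : ℝ)) / 2 = β * z := by
      push_cast; rw [hz]; field_simp; ring
    rw [hbase]
    have hsplit : (β * z) ^ (-β) = β ^ (-β) * z ^ (-β) :=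
      Real.mul_rpow hβpos.le hzpos.le
    rw [hsplit, ← mul_assoc, ← Real.rpow_add hβpos, add_neg_cancel, rpow_zero, one_mul]
    have hδeq : δ (t' + n) = (δ (t' + n) ^ (-1 / β)) ^ (-β) := by
      rw [← Real.rpow_mul (hnonneg _)]
      rw [show -1 / β * -β = 1 by field_simp, rpow_one]
    rw [hδeq]
    exact rpow_le_rpow_of_nonpos hzpos hu (neg_nonpos.mpr hβpos.le)
end

section
/- For the softmax tabular policy, the map θ ↦ ∇²_θ log π_θ(a|s) is 6-Lipschitz in operator norm: ‖∇² log π_{θ'}(a|s) − ∇² log π_θ(a|s)‖ ≤ 6‖θ − θ'‖₂ for all θ, θ' and all state-action pairs (s,a). -/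
/-- The ℓ²→ℓ² operator norm of a square real matrix. -/
noncomputable def matOpNorm {n : Type*} [Fintype n] [DecidableEq n] (A : Matrix n n ℝ) : ℝ :=
  ‖LinearMap.toContinuousLinearMap (Matrix.toEuclideanLin A)‖

/-- The softmax tabular policy `π_θ(a|s)` with parameters `θ : S × A → ℝ`. -/
noncomputable def softmaxPolicy' {S A : Type*} [Fintype A] (θ : S × A → ℝ) (s : S) (a : A) : ℝ :=
  Real.exp (θ (s, a)) / ∑ a', Real.exp (θ (s, a'))

/-- The Hessian of `log π_θ(a|s)` with respect to the block `θ_s`: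
`π_θ(·|s)π_θ(·|s)ᵀ − Diag(π_θ(·|s))`. -/
noncomputable def softmaxLogHessian {S A : Type*} [Fintype A] [DecidableEq A]
    (θ : S × A → ℝ) (s : S) : Matrix A A ℝ :=
  Matrix.of fun a' a'' =>
    softmaxPolicy' θ s a' * softmaxPolicy' θ s a''
      - (if a' = a'' then softmaxPolicy' θ s a' else 0)

namespace Stmt15Aux

open Finset

lemma abs_sum_mul_le' {A : Type*} [Fintype A] (f g : A → ℝ) :
    |∑ a, f a * g a| ≤ Real.sqrt (∑ a, f a ^ 2) * Real.sqrt (∑ a, g a ^ 2) := by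
  rw [← Real.sqrt_sq_eq_abs, ← Real.sqrt_mul (by positivity)]
  exact Real.sqrt_le_sqrt (Finset.sum_mul_sq_le_sq_mul_sq _ _ _)

lemma matOpNorm_le_aux {A : Type*} [Fintype A] [DecidableEq A] {M : Matrix A A ℝ} {C : ℝ}
    (hC : 0 ≤ C)
    (h : ∀ x : EuclideanSpace ℝ A, ‖Matrix.toEuclideanLin M x‖ ≤ C * ‖x‖) : matOpNorm M ≤ C := by
  apply ContinuousLinearMap.opNorm_le_bound _ hC
  intro x; simpa using h x

lemma enorm_eq {A : Type*} [Fintype A] (x : EuclideanSpace ℝ A) :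
    ‖x‖ = Real.sqrt (∑ i, (x i) ^ 2) := by
  rw [EuclideanSpace.norm_eq]; simp [Real.norm_eq_abs, sq_abs]

lemma matOpNorm_add_le' {A : Type*} [Fintype A] [DecidableEq A] (M N : Matrix A A ℝ) :
    matOpNorm (M + N) ≤ matOpNorm M + matOpNorm N := by
  unfold matOpNorm
  rw [map_add, map_add]
  exact norm_add_le _ _

lemma matOpNorm_sub_le' {A : Type*} [Fintype A] [DecidableEq A] (M N : Matrix A A ℝ) :
    matOpNorm (M - N) ≤ matOpNorm M + matOpNorm N := by
  unfold matOpNorm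
  rw [map_sub, map_sub]
  exact norm_sub_le _ _

lemma matOpNorm_vecMulVec_le {A : Type*} [Fintype A] [DecidableEq A] (u v : A → ℝ) :
    matOpNorm (Matrix.vecMulVec u v) ≤ Real.sqrt (∑ a, u a ^ 2) * Real.sqrt (∑ a, v a ^ 2) := by
  apply matOpNorm_le_aux (by positivity)
  intro x
  have hx : ∀ i, (Matrix.toEuclideanLin (Matrix.vecMulVec u v) x) i
      = u i * ∑ j, v j * x j := by
    intro i
    show ∑ j, (u i * v j) * x j = _
    rw [Finset.mul_sum]; congr 1; ext j; ring
  have h1 : ‖Matrix.toEuclideanLin (Matrix.vecMulVec u v) x‖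
      = Real.sqrt (∑ i, u i ^ 2) * |∑ j, v j * x j| := by
    rw [enorm_eq]
    simp_rw [hx, mul_pow, ← Finset.sum_mul]
    rw [Real.sqrt_mul (by positivity), Real.sqrt_sq_eq_abs]
  rw [h1, enorm_eq]
  calc Real.sqrt (∑ i, u i ^ 2) * |∑ j, v j * x j|
      ≤ Real.sqrt (∑ i, u i ^ 2) * (Real.sqrt (∑ a, v a ^ 2) * Real.sqrt (∑ a, (x a) ^ 2)) :=
        mul_le_mul_of_nonneg_left (abs_sum_mul_le' v x) (Real.sqrt_nonneg _)
    _ = Real.sqrt (∑ a, u a ^ 2) * Real.sqrt (∑ a, v a ^ 2) * Real.sqrt (∑ i, (x i) ^ 2) := by ring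

lemma matOpNorm_diagonal_le {A : Type*} [Fintype A] [DecidableEq A] (w : A → ℝ) :
    matOpNorm (Matrix.diagonal w) ≤ Real.sqrt (∑ a, w a ^ 2) := by
  apply matOpNorm_le_aux (Real.sqrt_nonneg _)
  intro x
  have hx : ∀ i, (Matrix.toEuclideanLin (Matrix.diagonal w) x) i = w i * x i := by
    intro i
    show ∑ j, (Matrix.diagonal w i j) * x j = _
    rw [Finset.sum_eq_single i (fun j _ hj => by simp [Matrix.diagonal_apply_ne' _ hj])
      (by simp)]
    simp
  rw [enorm_eq, enorm_eq, ← Real.sqrt_mul (by positivity)]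
  apply Real.sqrt_le_sqrt
  simp_rw [hx]
  calc ∑ i, (w i * x i) ^ 2 ≤ ∑ i, (∑ a, w a ^ 2) * x i ^ 2 := by
        apply Finset.sum_le_sum
        intro i _
        have h2 : w i ^ 2 ≤ ∑ a, w a ^ 2 :=
          Finset.single_le_sum (f := fun a => w a ^ 2) (fun a _ => sq_nonneg _) (mem_univ i)
        rw [mul_pow]
        exact mul_le_mul_of_nonneg_right h2 (sq_nonneg _)
    _ = (∑ a, w a ^ 2) * ∑ i, (x i) ^ 2 := (Finset.mul_sum _ _ _).symm

lemma softmax_key {S A : Type*} [Fintype A] [Nonempty A] (θ θ' : S × A → ℝ) (s : S) (u : A → ℝ) :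
    |(∑ a, u a * softmaxPolicy' θ s a) - ∑ a, u a * softmaxPolicy' θ' s a|
      ≤ 2 * Real.sqrt (∑ a, u a ^ 2) * Real.sqrt (∑ a, (θ (s, a) - θ' (s, a)) ^ 2) := by
  set c : A → ℝ := fun a => θ (s, a) - θ' (s, a) with hc
  set e : ℝ → A → ℝ := fun t a => Real.exp (θ' (s, a) + t * c a) with he_def
  set N : ℝ → ℝ := fun t => ∑ a, u a * e t a with hN_def
  set D : ℝ → ℝ := fun t => ∑ a, e t a with hD_def
  set N' : ℝ → ℝ := fun t => ∑ a, u a * (c a * e t a) with hN'_def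
  set D' : ℝ → ℝ := fun t => ∑ a, c a * e t a with hD'_def
  have hepos : ∀ t a, 0 < e t a := fun t a => Real.exp_pos _
  have hDpos : ∀ t, 0 < D t := fun t => Finset.sum_pos (fun a _ => hepos t a) univ_nonempty
  set g : ℝ → ℝ := fun t => N t / D t with hg_def
  have he : ∀ t a, HasDerivAt (fun t => e t a) (c a * e t a) t := by
    intro t a
    have h0 : HasDerivAt (fun t : ℝ => θ' (s, a) + t * c a) (c a) t := by
      simpa using (hasDerivAt_mul_const (c a)).const_add (θ' (s, a))
    simpa [he_def, mul_comm] using h0.exp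
  have hN : ∀ t, HasDerivAt N (N' t) t := fun t =>
    HasDerivAt.fun_sum (fun a _ => ((he t a).const_mul (u a)))
  have hD : ∀ t, HasDerivAt D (D' t) t := fun t => HasDerivAt.fun_sum (fun a _ => he t a)
  have hg : ∀ t, HasDerivAt g ((N' t * D t - N t * D' t) / D t ^ 2) t := fun t =>
    (hN t).div (hD t) (ne_of_gt (hDpos t))
  set Cu := Real.sqrt (∑ a, u a ^ 2) with hCu
  set Cd := Real.sqrt (∑ a, c a ^ 2) with hCd
  have hbound : ∀ t, |(N' t * D t - N t * D' t) / D t ^ 2| ≤ 2 * Cu * Cd := by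
    intro t
    set π : A → ℝ := fun a => e t a / D t with hπ_def
    have hπ0 : ∀ a, 0 ≤ π a := fun a => le_of_lt (div_pos (hepos t a) (hDpos t))
    have hπ1 : ∀ a, π a ≤ 1 := by
      intro a
      rw [hπ_def, div_le_one (hDpos t)]
      exact Finset.single_le_sum (f := fun a => e t a) (fun b _ => (hepos t b).le) (mem_univ a)
    have hπsum : ∑ a, π a = 1 := by
      rw [hπ_def, ← Finset.sum_div, div_self (ne_of_gt (hDpos t))]
    have hπsq : Real.sqrt (∑ a, π a ^ 2) ≤ 1 := by
      have hle : ∑ a, π a ^ 2 ≤ 1 := by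
        calc ∑ a, π a ^ 2 ≤ ∑ a, π a := by
              apply Finset.sum_le_sum
              intro a _
              nlinarith [hπ0 a, hπ1 a]
          _ = 1 := hπsum
      calc Real.sqrt (∑ a, π a ^ 2) ≤ Real.sqrt 1 := Real.sqrt_le_sqrt hle
        _ = 1 := Real.sqrt_one
    have hD0 := ne_of_gt (hDpos t)
    have heq : (N' t * D t - N t * D' t) / D t ^ 2
        = N' t / D t - N t / D t * (D' t / D t) := by
      field_simp
    have e1 : N' t / D t = ∑ a, u a * (c a * π a) := by
      simp only [hN'_def, hπ_def]
      rw [Finset.sum_div]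
      exact Finset.sum_congr rfl fun a _ => by ring
    have e2 : N t / D t = ∑ a, u a * π a := by
      simp only [hN_def, hπ_def]
      rw [Finset.sum_div]
      exact Finset.sum_congr rfl fun a _ => by ring
    have e3 : D' t / D t = ∑ a, c a * π a := by
      simp only [hD'_def, hπ_def]
      rw [Finset.sum_div]
      exact Finset.sum_congr rfl fun a _ => by ring
    rw [heq, e1, e2, e3]
    have h1 : |∑ a, u a * (c a * π a)| ≤ Cu * Cd := by
      refine (abs_sum_mul_le' u (fun a => c a * π a)).trans ?_
      apply mul_le_mul_of_nonneg_left _ (Real.sqrt_nonneg _)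
      apply Real.sqrt_le_sqrt
      apply Finset.sum_le_sum
      intro a _
      have hπa : π a ^ 2 ≤ 1 := by nlinarith [hπ0 a, hπ1 a]
      calc (c a * π a) ^ 2 = c a ^ 2 * π a ^ 2 := by ring
        _ ≤ c a ^ 2 * 1 := mul_le_mul_of_nonneg_left hπa (sq_nonneg _)
        _ = c a ^ 2 := mul_one _
    have h2 : |∑ a, u a * π a| ≤ Cu := by
      refine (abs_sum_mul_le' u π).trans ?_
      calc Cu * Real.sqrt (∑ a, π a ^ 2) ≤ Cu * 1 :=
            mul_le_mul_of_nonneg_left hπsq (Real.sqrt_nonneg _)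
        _ = Cu := mul_one _
    have h3 : |∑ a, c a * π a| ≤ Cd := by
      refine (abs_sum_mul_le' c π).trans ?_
      calc Cd * Real.sqrt (∑ a, π a ^ 2) ≤ Cd * 1 :=
            mul_le_mul_of_nonneg_left hπsq (Real.sqrt_nonneg _)
        _ = Cd := mul_one _
    calc |(∑ a, u a * (c a * π a)) - (∑ a, u a * π a) * (∑ a, c a * π a)|
        ≤ |∑ a, u a * (c a * π a)| + |(∑ a, u a * π a) * (∑ a, c a * π a)| := abs_sub _ _
      _ ≤ Cu * Cd + Cu * Cd := by
          rw [abs_mul]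
          gcongr
      _ = 2 * Cu * Cd := by ring
  have hmvt : ‖g 1 - g 0‖ ≤ (2 * Cu * Cd) * ‖(1 : ℝ) - 0‖ :=
    convex_univ.norm_image_sub_le_of_norm_hasDerivWithin_le
      (fun t _ => (hg t).hasDerivWithinAt)
      (fun t _ => by rw [Real.norm_eq_abs]; exact hbound t)
      (Set.mem_univ (0 : ℝ)) (Set.mem_univ (1 : ℝ))
  have hg1 : g 1 = ∑ a, u a * softmaxPolicy' θ s a := by
    have hee : ∀ a, e 1 a = Real.exp (θ (s, a)) := by
      intro a; rw [he_def]; ring_nf; simp [hc]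
    show (∑ a, u a * e 1 a) / (∑ a, e 1 a) = _
    simp_rw [hee]
    rw [Finset.sum_div]
    apply Finset.sum_congr rfl
    intro a _
    rw [softmaxPolicy', mul_div_assoc]
  have hg0 : g 0 = ∑ a, u a * softmaxPolicy' θ' s a := by
    have hee : ∀ a, e 0 a = Real.exp (θ' (s, a)) := by
      intro a; rw [he_def]; ring_nf
    show (∑ a, u a * e 0 a) / (∑ a, e 0 a) = _
    simp_rw [hee]
    rw [Finset.sum_div]
    apply Finset.sum_congr rfl
    intro a _
    rw [softmaxPolicy', mul_div_assoc]
  rw [hg1, hg0] at hmvt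
  simpa [Real.norm_eq_abs] using hmvt

lemma softmax_lip {S A : Type*} [Fintype S] [Fintype A] [Nonempty A] (θ θ' : S × A → ℝ) (s : S) :
    Real.sqrt (∑ a, (softmaxPolicy' θ s a - softmaxPolicy' θ' s a) ^ 2)
      ≤ 2 * Real.sqrt (∑ p : S × A, (θ p - θ' p) ^ 2) := by
  set u : A → ℝ := fun a => softmaxPolicy' θ s a - softmaxPolicy' θ' s a with hu
  have hsub : Real.sqrt (∑ a, (θ (s, a) - θ' (s, a)) ^ 2)
      ≤ Real.sqrt (∑ p : S × A, (θ p - θ' p) ^ 2) := by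
    apply Real.sqrt_le_sqrt
    rw [Fintype.sum_prod_type]
    exact Finset.single_le_sum (f := fun s' => ∑ a, (θ (s', a) - θ' (s', a)) ^ 2)
      (fun s' _ => Finset.sum_nonneg fun a _ => sq_nonneg _) (mem_univ s)
  have hkey := softmax_key θ θ' s u
  have hlhs : (∑ a, u a * softmaxPolicy' θ s a) - ∑ a, u a * softmaxPolicy' θ' s a
      = ∑ a, u a ^ 2 := by
    rw [← Finset.sum_sub_distrib]
    apply Finset.sum_congr rfl
    intro a _
    rw [hu]; ring
  rw [hlhs] at hkey
  set Q := Real.sqrt (∑ a, u a ^ 2) with hQ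
  have hQ0 : 0 ≤ Q := Real.sqrt_nonneg _
  have hQsq : Q ^ 2 = ∑ a, u a ^ 2 := Real.sq_sqrt (by positivity)
  have habs : |∑ a, u a ^ 2| = ∑ a, u a ^ 2 := abs_of_nonneg (by positivity)
  rw [habs, ← hQsq] at hkey
  rcases eq_or_lt_of_le hQ0 with h0 | h0
  · rw [← h0]; positivity
  · have : Q ≤ 2 * Real.sqrt (∑ a, (θ (s, a) - θ' (s, a)) ^ 2) := by
      nlinarith [hkey]
    calc Q ≤ 2 * Real.sqrt (∑ a, (θ (s, a) - θ' (s, a)) ^ 2) := this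
      _ ≤ 2 * Real.sqrt (∑ p : S × A, (θ p - θ' p) ^ 2) := by linarith [hsub]

lemma softmax_norm_le_one {S A : Type*} [Fintype A] [Nonempty A] (θ : S × A → ℝ) (s : S) :
    Real.sqrt (∑ a, softmaxPolicy' θ s a ^ 2) ≤ 1 := by
  have hDpos : (0 : ℝ) < ∑ a' : A, Real.exp (θ (s, a')) :=
    Finset.sum_pos (fun a _ => Real.exp_pos _) univ_nonempty
  have h0 : ∀ a, 0 ≤ softmaxPolicy' θ s a :=
    fun a => le_of_lt (div_pos (Real.exp_pos _) hDpos)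
  have h1 : ∀ a, softmaxPolicy' θ s a ≤ 1 := by
    intro a
    rw [softmaxPolicy', div_le_one hDpos]
    exact Finset.single_le_sum (f := fun a' => Real.exp (θ (s, a')))
      (fun b _ => (Real.exp_pos _).le) (mem_univ a)
  have hsum : ∑ a, softmaxPolicy' θ s a = 1 := by
    simp only [softmaxPolicy']
    rw [← Finset.sum_div, div_self hDpos.ne']
  have hle : ∑ a, softmaxPolicy' θ s a ^ 2 ≤ 1 := by
    calc ∑ a, softmaxPolicy' θ s a ^ 2 ≤ ∑ a, softmaxPolicy' θ s a := by
          apply Finset.sum_le_sum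
          intro b _
          nlinarith [h0 b, h1 b]
      _ = 1 := hsum
  calc Real.sqrt (∑ a, softmaxPolicy' θ s a ^ 2) ≤ Real.sqrt 1 := Real.sqrt_le_sqrt hle
    _ = 1 := Real.sqrt_one

end Stmt15Aux

theorem stmt_15 {S A : Type*} [Fintype S] [Fintype A] [DecidableEq A]
    (θ θ' : EuclideanSpace ℝ (S × A)) (s : S) (a : A) :
    matOpNorm (softmaxLogHessian θ' s - softmaxLogHessian θ s) ≤ 6 * ‖θ - θ'‖ := by
  classical
  rcases isEmpty_or_nonempty A with hA | hA
  · apply Stmt15Aux.matOpNorm_le_aux (by positivity)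
    intro x
    have h0 : ‖Matrix.toEuclideanLin (softmaxLogHessian θ' s - softmaxLogHessian θ s) x‖ = 0 := by
      rw [Stmt15Aux.enorm_eq]
      simp
    rw [h0]
    positivity
  · set P : A → ℝ := fun b => softmaxPolicy' θ s b with hP
    set P' : A → ℝ := fun b => softmaxPolicy' θ' s b with hP'
    set w : A → ℝ := fun b => P' b - P b with hw
    have hdecomp : softmaxLogHessian θ' s - softmaxLogHessian θ s
        = (Matrix.vecMulVec P' w + Matrix.vecMulVec w P) - Matrix.diagonal w := by
      ext b b'
      show (softmaxPolicy' θ' s b * softmaxPolicy' θ' s b'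
          - (if b = b' then softmaxPolicy' θ' s b else 0))
          - (softmaxPolicy' θ s b * softmaxPolicy' θ s b'
          - (if b = b' then softmaxPolicy' θ s b else 0))
        = (P' b * w b' + w b * P b') - (if b = b' then w b else 0)
      simp only [hw, hP, hP']
      split_ifs with hb <;> ring

    have hwle : Real.sqrt (∑ b, w b ^ 2) ≤ 2 * ‖θ - θ'‖ := by
      have hnorm : ‖θ - θ'‖ = Real.sqrt (∑ p : S × A, (θ' p - θ p) ^ 2) := by
        rw [← norm_sub_rev, Stmt15Aux.enorm_eq]
        congr 1
      rw [hnorm]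
      exact Stmt15Aux.softmax_lip θ' θ s
    have hP1 : Real.sqrt (∑ b, P b ^ 2) ≤ 1 := Stmt15Aux.softmax_norm_le_one θ s
    have hP'1 : Real.sqrt (∑ b, P' b ^ 2) ≤ 1 := Stmt15Aux.softmax_norm_le_one θ' s
    have hw0 : 0 ≤ Real.sqrt (∑ b, w b ^ 2) := Real.sqrt_nonneg _
    rw [hdecomp]
    calc matOpNorm ((Matrix.vecMulVec P' w + Matrix.vecMulVec w P) - Matrix.diagonal w)
        ≤ matOpNorm (Matrix.vecMulVec P' w + Matrix.vecMulVec w P)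
            + matOpNorm (Matrix.diagonal w) := Stmt15Aux.matOpNorm_sub_le' _ _
      _ ≤ (matOpNorm (Matrix.vecMulVec P' w) + matOpNorm (Matrix.vecMulVec w P))
            + matOpNorm (Matrix.diagonal w) := by
          gcongr
          exact Stmt15Aux.matOpNorm_add_le' _ _
      _ ≤ (Real.sqrt (∑ b, P' b ^ 2) * Real.sqrt (∑ b, w b ^ 2)
            + Real.sqrt (∑ b, w b ^ 2) * Real.sqrt (∑ b, P b ^ 2))
            + Real.sqrt (∑ b, w b ^ 2) := by
          gcongr
          · exact Stmt15Aux.matOpNorm_vecMulVec_le _ _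
          · exact Stmt15Aux.matOpNorm_vecMulVec_le _ _
          · exact Stmt15Aux.matOpNorm_diagonal_le _
      _ ≤ (1 * Real.sqrt (∑ b, w b ^ 2) + Real.sqrt (∑ b, w b ^ 2) * 1)
            + Real.sqrt (∑ b, w b ^ 2) := by
          gcongr
      _ = 3 * Real.sqrt (∑ b, w b ^ 2) := by ring
      _ ≤ 3 * (2 * ‖θ - θ'‖) := by linarith [hwle]
      _ = 6 * ‖θ - θ'‖ := by ring
end

section
/- Suppose J satisfies the weak gradient dominance property J* − J(θ) ≤ ε' + τ_J‖∇J(θ)‖ for all θ, and a sequence (θ_t) satisfies J* − J(θ_{t+1}) − ε' ≤ τ_J‖∇J(θ_{t+1})‖ ≤ C(J(θ_{t+1}) − J(θ_t))^{2/3} + e_t for nonnegative errors e_t. If e_t ≤ P for all t, then the quantity δ_t := (J* − J(θ_t) − P − ε')/C³ satisfies δ_{t+1} ≤ (δ_t − δ_{t+1})^{2/3}, and hence δ_T ≤ 4/(DT)² where D = min{1/2, 2(2^{1/3}−1)δ_0^{−1/2}}; consequently J* − J(θ_T) ≤ 4C³/(DT)² + P + ε'. -/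
open Real in
private lemma aux_rpow23_div (x c : ℝ) (hc : 0 < c) :
    (x / c) ^ ((2:ℝ)/3) = x ^ ((2:ℝ)/3) / c ^ ((2:ℝ)/3) := by
  rcases lt_trichotomy x 0 with hx | hx | hx
  · have hxc : x / c < 0 := div_neg_of_neg_of_pos hx hc
    rw [Real.rpow_def_of_neg hxc, Real.rpow_def_of_neg hx, Real.rpow_def_of_pos hc,
        Real.log_div (ne_of_lt hx) (ne_of_gt hc), sub_mul, Real.exp_sub]
    ring
  · simp [hx, Real.zero_rpow (by norm_num : (2:ℝ)/3 ≠ 0)]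
  · exact Real.div_rpow hx.le hc.le _

open Real in
private lemma aux_rpow23_nonpos {v : ℝ} (hv : v ≤ 0) : v ^ ((2:ℝ)/3) ≤ 0 := by
  rcases lt_or_eq_of_le hv with hv' | hv'
  · rw [Real.rpow_def_of_neg hv']
    have hcos : Real.cos ((2:ℝ)/3 * π) < 0 := by
      rw [show (2:ℝ)/3*π = π - π/3 by ring, Real.cos_pi_sub, Real.cos_pi_div_three]
      norm_num
    exact (mul_neg_of_pos_of_neg (Real.exp_pos _) hcos).le
  · rw [hv', Real.zero_rpow (by norm_num : (2:ℝ)/3 ≠ 0)]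

open Real in
private lemma aux_key_step (x y d0 c : ℝ) (hx : 0 < x) (hd0 : 0 < d0) (hy : y ≤ d0)
    (hrec : x + x ^ ((3:ℝ)/2) ≤ y)
    (hc1 : c ≤ 1/4) (hc2 : c ≤ (Real.sqrt 2 - 1)/Real.sqrt d0) :
    1/Real.sqrt y + c ≤ 1/Real.sqrt x := by
  have hx32 : 0 < x ^ ((3:ℝ)/2) := Real.rpow_pos_of_pos hx _
  have hy0 : 0 < y := by linarith
  set a := Real.sqrt x with ha_def
  set b := Real.sqrt y with hb_def
  set s := Real.sqrt d0 with hs_def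
  have ha : 0 < a := Real.sqrt_pos.mpr hx
  have hb : 0 < b := Real.sqrt_pos.mpr hy0
  have hs : 0 < s := Real.sqrt_pos.mpr hd0
  have ha2 : a ^ 2 = x := Real.sq_sqrt hx.le
  have hb2 : b ^ 2 = y := Real.sq_sqrt hy0.le
  have hbs : b ≤ s := Real.sqrt_le_sqrt hy
  have hx3 : x ^ ((3:ℝ)/2) = a ^ 3 := by
    rw [show (3:ℝ)/2 = (1/2)*3 by ring, Real.rpow_mul hx.le, ← Real.sqrt_eq_rpow,
        ← Real.rpow_natCast (Real.sqrt x) 3]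
    norm_num
  have hmain : a ^ 2 + a ^ 3 ≤ b ^ 2 := by rw [ha2, hb2, ← hx3]; exact hrec
  have hab : a ≤ b := by nlinarith
  by_cases hcase : b ^ 2 ≤ 2 * a ^ 2
  · -- use c ≤ 1/4
    have key : 4*a + a*b ≤ 4*b := by nlinarith [sq_nonneg (b - a), mul_pos ha hb]
    have h2 : 1/b + (1/4 : ℝ) = (4 + b)/(4*b) := by
      rw [div_add_div _ _ hb.ne' (by norm_num : (4:ℝ) ≠ 0)]
      ring_nf
    have h3 : (4 + b)/(4*b) ≤ 1/a := by
      rw [div_le_div_iff₀ (by positivity) ha]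
      nlinarith
    linarith [h2 ▸ h3]
  · -- use c ≤ (√2-1)/s
    push_neg at hcase
    have hsqrt2 : (1:ℝ) ≤ Real.sqrt 2 := by
      rw [show (1:ℝ) = Real.sqrt 1 by simp]
      exact Real.sqrt_le_sqrt (by norm_num)
    have hab2 : Real.sqrt 2 * a < b := by
      have h := Real.sqrt_lt_sqrt (by positivity) hcase
      rwa [Real.sqrt_mul (by norm_num) (a^2), Real.sqrt_sq ha.le, Real.sqrt_sq hb.le] at h
    have hc2' : c ≤ (Real.sqrt 2 - 1)/b :=
      le_trans hc2 (div_le_div_of_nonneg_left (by linarith) hb hbs)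
    have hfin : 1/b + (Real.sqrt 2 - 1)/b ≤ 1/a := by
      rw [← add_div, div_le_div_iff₀ hb ha]
      nlinarith
    linarith

theorem stmt_17 (d : ℕ)
    (J : EuclideanSpace ℝ (Fin d) → ℝ)
    (gradJ : EuclideanSpace ℝ (Fin d) → EuclideanSpace ℝ (Fin d))
    (hgrad : ∀ θ, HasGradientAt J (gradJ θ) θ)
    (Jstar τJ ε' C P : ℝ)
    (hub : ∀ θ, J θ ≤ Jstar)
    (hτJ : 0 < τJ) (hε' : 0 ≤ ε') (hC : 0 < C) (hP : 0 ≤ P)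
    (hWGD : ∀ θ, Jstar - J θ ≤ ε' + τJ * ‖gradJ θ‖)
    (θseq : ℕ → EuclideanSpace ℝ (Fin d)) (e : ℕ → ℝ) (he : ∀ t, 0 ≤ e t)
    (hrec : ∀ t, τJ * ‖gradJ (θseq (t + 1))‖ ≤
      C * (J (θseq (t + 1)) - J (θseq t)) ^ ((2 : ℝ) / 3) + e t)
    (heP : ∀ t, e t ≤ P)
    (δ : ℕ → ℝ) (hδ : ∀ t, δ t = (Jstar - J (θseq t) - P - ε') / C ^ 3)
    (hδ0 : 0 < δ 0)
    (D : ℝ) (hD : D = min (1 / 2) (2 * ((2 : ℝ) ^ ((1 : ℝ) / 3) - 1) * (δ 0) ^ (-(1 : ℝ) / 2))) :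
    (∀ t, δ (t + 1) ≤ (δ t - δ (t + 1)) ^ ((2 : ℝ) / 3)) ∧
    (∀ T : ℕ, 0 < T → δ T ≤ 4 / (D * T) ^ 2) ∧
    (∀ T : ℕ, 0 < T → Jstar - J (θseq T) ≤ 4 * C ^ 3 / (D * T) ^ 2 + P + ε') := by
  have hC3 : (0:ℝ) < C ^ 3 := by positivity
  have hC2 : (0:ℝ) < C ^ 2 := by positivity
  -- (C^3)^(2/3) = C^2
  have hC32 : (C ^ 3 : ℝ) ^ ((2:ℝ)/3) = C ^ 2 := by
    rw [← Real.rpow_natCast C 3, ← Real.rpow_mul hC.le]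
    rw [show ((3:ℕ):ℝ) * ((2:ℝ)/3) = ((2:ℕ):ℝ) by push_cast; ring, Real.rpow_natCast]
  -- Part 1
  have part1 : ∀ t, δ (t + 1) ≤ (δ t - δ (t + 1)) ^ ((2 : ℝ) / 3) := by
    intro t
    have h1 := hWGD (θseq (t+1))
    have h2 := hrec t
    have h3 := heP t
    have key : Jstar - J (θseq (t+1)) - P - ε'
        ≤ C * (J (θseq (t + 1)) - J (θseq t)) ^ ((2 : ℝ) / 3) := by linarith
    have hdiff : δ t - δ (t+1) = (J (θseq (t + 1)) - J (θseq t)) / C ^ 3 := by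
      rw [hδ t, hδ (t+1), div_sub_div_same]
      ring_nf
    rw [hdiff, hδ (t+1), aux_rpow23_div _ _ hC3, hC32]
    rw [div_le_div_iff₀ hC3 hC2]
    nlinarith [mul_le_mul_of_nonneg_right key hC2.le]
  have part2 : ∀ T : ℕ, 0 < T → δ T ≤ 4 / (D * T) ^ 2 := by
    -- basic facts about D
    have h2gt1 : (1:ℝ) < (2:ℝ) ^ ((1:ℝ)/3) :=
      Real.one_lt_rpow_iff_of_pos (by norm_num) |>.mpr (Or.inl ⟨by norm_num, by norm_num⟩)
    have hrpow_neg : (δ 0) ^ (-(1:ℝ)/2) = 1 / Real.sqrt (δ 0) := by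
      rw [show (-(1:ℝ)/2) = -(1/2 : ℝ) by ring, Real.rpow_neg hδ0.le,
        ← Real.sqrt_eq_rpow, one_div]
    have hδ0s : 0 < Real.sqrt (δ 0) := Real.sqrt_pos.mpr hδ0
    have hDpos : 0 < D := by
      rw [hD]
      apply lt_min (by norm_num)
      rw [hrpow_neg]
      apply mul_pos (by nlinarith) (by positivity)
    have hD12 : D ≤ 1/2 := by rw [hD]; exact min_le_left _ _
    -- D/2 ≤ (√2 - 1)/√(δ 0)
    have hsqrt2 : (2:ℝ) ^ ((1:ℝ)/3) ≤ Real.sqrt 2 := by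
      rw [Real.sqrt_eq_rpow]
      exact Real.rpow_le_rpow_of_exponent_le (by norm_num) (by norm_num)
    have hD2b : D / 2 ≤ (Real.sqrt 2 - 1)/Real.sqrt (δ 0) := by
      have h1 : D ≤ 2 * ((2 : ℝ) ^ ((1 : ℝ) / 3) - 1) * (δ 0) ^ (-(1:ℝ)/2) := by
        rw [hD]; exact min_le_right _ _
      rw [hrpow_neg] at h1
      have h0 : (0:ℝ) ≤ 1 / Real.sqrt (δ 0) := by positivity
      have h2 : 2 * ((2 : ℝ) ^ ((1 : ℝ) / 3) - 1) * (1 / Real.sqrt (δ 0))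
          ≤ 2 * (Real.sqrt 2 - 1) * (1 / Real.sqrt (δ 0)) := by nlinarith
      have h3 : 2 * (Real.sqrt 2 - 1) * (1 / Real.sqrt (δ 0))
          = 2 * ((Real.sqrt 2 - 1) / Real.sqrt (δ 0)) := by ring
      linarith
    -- one-step facts
    have hdrop : ∀ t, δ t ≤ 0 → δ (t+1) ≤ 0 := by
      intro t ht
      by_contra hpos
      push_neg at hpos
      have h := part1 t
      have hneg : δ t - δ (t+1) ≤ 0 := by linarith
      have := aux_rpow23_nonpos hneg
      linarith
    have hposstep : ∀ t, 0 < δ (t+1) → δ (t+1) + δ (t+1) ^ ((3:ℝ)/2) ≤ δ t := by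
      intro t ht
      have h := part1 t
      have hv : 0 < δ t - δ (t+1) := by
        by_contra hv
        push_neg at hv
        have := aux_rpow23_nonpos hv
        linarith
      have h32 : δ (t+1) ^ ((3:ℝ)/2) ≤ ((δ t - δ (t+1)) ^ ((2:ℝ)/3)) ^ ((3:ℝ)/2) :=
        Real.rpow_le_rpow ht.le h (by norm_num)
      rw [← Real.rpow_mul hv.le] at h32
      norm_num at h32
      linarith
    intro T hT
    have hRHSpos : (0:ℝ) < 4 / (D * T) ^ 2 := by
      have : (0:ℝ) < (T:ℝ) := by exact_mod_cast hT
      positivity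
    by_cases hall : ∀ s ≤ T, 0 < δ s
    · -- positive case: induction on 1/√δ
      have claim : ∀ s ≤ T, 1/Real.sqrt (δ 0) + s * (D/2) ≤ 1/Real.sqrt (δ s) := by
        intro s hsT
        induction s with
        | zero => simp
        | succ n ih =>
          have hn : n ≤ T := le_trans (Nat.le_succ n) hsT
          have ihn := ih hn
          have hδn : 0 < δ n := hall n hn
          have hδn1 : 0 < δ (n+1) := hall (n+1) hsT
          -- δ n ≤ δ 0
          have hle : 1/Real.sqrt (δ 0) ≤ 1/Real.sqrt (δ n) := by
            have : 0 ≤ (n:ℝ) * (D/2) := by positivity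
            linarith
          have hsn : Real.sqrt (δ n) ≤ Real.sqrt (δ 0) := by
            rw [div_le_div_iff₀ hδ0s (Real.sqrt_pos.mpr hδn)] at hle
            linarith
          have hδnle : δ n ≤ δ 0 := by
            calc δ n = Real.sqrt (δ n) ^ 2 := (Real.sq_sqrt hδn.le).symm
              _ ≤ Real.sqrt (δ 0) ^ 2 := by
                  exact pow_le_pow_left₀ (Real.sqrt_nonneg _) hsn 2
              _ = δ 0 := Real.sq_sqrt hδ0.le
          have hstep := aux_key_step (δ (n+1)) (δ n) (δ 0) (D/2) hδn1 hδ0 hδnle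
            (hposstep n hδn1) (by linarith) hD2b
          push_cast
          linarith
      have hfin := claim T le_rfl
      have hTpos : (0:ℝ) < (T:ℝ) := by exact_mod_cast hT
      have hδT : 0 < δ T := hall T le_rfl
      have hsT : 0 < Real.sqrt (δ T) := Real.sqrt_pos.mpr hδT
      have h1 : (T:ℝ) * (D/2) ≤ 1/Real.sqrt (δ T) := by
        have : 0 ≤ 1/Real.sqrt (δ 0) := by positivity
        linarith
      have h2 : Real.sqrt (δ T) * (D * T) ≤ 2 := by
        have h3 := mul_le_mul_of_nonneg_left h1 hsT.le
        rw [one_div, mul_inv_cancel₀ hsT.ne'] at h3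
        nlinarith
      have h4 : Real.sqrt (δ T) ≤ 2 / (D * T) := by
        rw [le_div_iff₀ (by positivity)]
        exact h2
      calc δ T = Real.sqrt (δ T) ^ 2 := (Real.sq_sqrt hδT.le).symm
        _ ≤ (2 / (D * T)) ^ 2 := pow_le_pow_left₀ hsT.le h4 2
        _ = 4 / (D * T) ^ 2 := by rw [div_pow]; norm_num
    · -- some δ s ≤ 0
      push_neg at hall
      obtain ⟨s, hsT, hs0⟩ := hall
      have hk : ∀ k, δ (s + k) ≤ 0 := by
        intro k
        induction k with
        | zero => simpa using hs0
        | succ n ih => exact hdrop (s + n) ih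
      have : δ T ≤ 0 := by
        have := hk (T - s)
        rwa [Nat.add_sub_cancel' hsT] at this
      linarith
  refine ⟨part1, part2, ?_⟩
  intro T hT
  have h := part2 T hT
  rw [hδ T, div_le_iff₀ hC3] at h
  have : 4 / (D * T) ^ 2 * C ^ 3 = 4 * C ^ 3 / (D * T) ^ 2 := by ring
  linarith [this ▸ h]
end
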